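/- arXiv:1409.2118 — 6 statements merged into one kernel-verified Lean document; each statement's English description precedes it below -/
import Mathlib

section
/- Let n ≥ 2 be an integer, f = sinh, and suppose y : (0,∞) → ℝ is a twice differentiable positive solution of y'' + (n-1)(f'/f)y' - (n-1)y/f² = 0 with y(r) → +∞ as r → 0⁺, y(r) → 0 as r → +∞, and y' < 0 on (0,∞). Then setting x = y'/y, one has x(r) ≥ R₁(r) for all r > 0, where R₁(r) = [-(n-1)cosh r - √((n-1)²cosh²r + 4(n-1))]/(2 sinh r). -/
set_option maxHeartbeats 1000000


open Real Set Filter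

/-- If `f` has positive derivative at `a`, then `f a < f s` for `s` slightly to the right. -/
lemma eventually_gt_right_aux {f : ℝ → ℝ} {a d : ℝ} (hf : HasDerivAt f d a) (hd : 0 < d) :
    ∀ᶠ s in nhdsWithin a (Ioi a), f a < f s := by
  have h := hasDerivAt_iff_tendsto_slope.mp hf
  have h1 : ∀ᶠ s in nhdsWithin a {a}ᶜ, 0 < slope f a s :=
    h.eventually (eventually_gt_nhds hd)
  have h2 : nhdsWithin a (Ioi a) ≤ nhdsWithin a {a}ᶜ :=
    nhdsWithin_mono a (fun x hx => ne_of_gt hx)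
  filter_upwards [h2 h1, self_mem_nhdsWithin] with s hs hs'
  have hsa : (0:ℝ) < s - a := sub_pos.2 hs'
  rw [slope_def_field] at hs
  have hmul := mul_pos hs hsa
  rw [div_mul_cancel₀ _ (ne_of_gt hsa)] at hmul
  linarith

theorem stmt4 (n : ℕ) (hn : 2 ≤ n) (y : ℝ → ℝ)
    (hpos : ∀ r ∈ Ioi (0 : ℝ), 0 < y r)
    (hy1 : ∀ r ∈ Ioi (0 : ℝ), DifferentiableAt ℝ y r)
    (hy2 : ∀ r ∈ Ioi (0 : ℝ), DifferentiableAt ℝ (deriv y) r)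
    (hode : ∀ r ∈ Ioi (0 : ℝ),
      deriv (deriv y) r + (n - 1 : ℝ) * (Real.cosh r / Real.sinh r) * deriv y r
        - (n - 1 : ℝ) * y r / (Real.sinh r) ^ 2 = 0)
    (hlim0 : Tendsto y (nhdsWithin 0 (Ioi 0)) atTop)
    (hliminf : Tendsto y atTop (nhds 0))
    (hy' : ∀ r ∈ Ioi (0 : ℝ), deriv y r < 0)
    (x R₁ : ℝ → ℝ)
    (hx : ∀ r, x r = deriv y r / y r)
    (hR : ∀ r, R₁ r = (-(n - 1 : ℝ) * Real.cosh r
        - Real.sqrt ((n - 1 : ℝ) ^ 2 * (Real.cosh r) ^ 2 + 4 * (n - 1 : ℝ)))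
        / (2 * Real.sinh r)) :
    ∀ r ∈ Ioi (0 : ℝ), R₁ r ≤ x r := by
  intro r₀ hr₀
  by_contra hcon
  push_neg at hcon
  rw [hx, hR] at hcon
  simp only [mem_Ioi] at hr₀
  set m : ℝ := (n : ℝ) - 1 with hm_def
  have hm1 : (1:ℝ) ≤ m := by
    have h2 : (2:ℝ) ≤ (n:ℝ) := by exact_mod_cast hn
    rw [hm_def]; linarith
  have hm0 : (0:ℝ) < m := by linarith
  set s₀ : ℝ := Real.sinh r₀ with hs₀_def
  set c₀ : ℝ := Real.cosh r₀ with hc₀_def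
  have hs₀ : 0 < s₀ := Real.sinh_pos_iff.mpr hr₀
  have hc₀ : 0 < c₀ := Real.cosh_pos r₀
  set b₀ : ℝ := m * c₀ / s₀ with hb₀_def
  set k₀ : ℝ := m / s₀ ^ 2 with hk₀_def
  have hb₀pos : 0 < b₀ := by positivity
  have hk₀pos : 0 < k₀ := by positivity
  set u : ℝ → ℝ := fun t => y t / deriv y t with hu_def
  have huneg : ∀ r ∈ Ioi (0:ℝ), u r < 0 := fun r hr =>
    div_neg_of_pos_of_neg (hpos r hr) (hy' r hr)
  set u₀ : ℝ := u r₀ with hu₀_def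
  have hu₀neg : u₀ < 0 := huneg r₀ hr₀
  -- derivative of u
  have hderivu : ∀ r ∈ Ioi (0:ℝ), HasDerivAt u
      (1 + m * (Real.cosh r / Real.sinh r) * u r - m / (Real.sinh r)^2 * (u r)^2) r := by
    intro r hr
    have hrpos : (0:ℝ) < r := hr
    have h1 := (hy1 r hr).hasDerivAt
    have h2 := (hy2 r hr).hasDerivAt
    have hne : deriv y r ≠ 0 := ne_of_lt (hy' r hr)
    have hs : Real.sinh r ≠ 0 := ne_of_gt (Real.sinh_pos_iff.mpr hrpos)
    have hode' := hode r hr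
    have hy'' : deriv (deriv y) r
        = -(m * (Real.cosh r / Real.sinh r)) * deriv y r + m * y r / (Real.sinh r)^2 := by
      rw [hm_def]; linarith [hode']
    have hval : (deriv y r * deriv y r - y r * deriv (deriv y) r) / deriv y r ^ 2
        = 1 + m * (Real.cosh r / Real.sinh r) * (y r / deriv y r)
          - m / (Real.sinh r)^2 * (y r / deriv y r)^2 := by
      rw [hy'']
      field_simp
      ring
    have hdiv := h1.div h2 hne
    rw [hval] at hdiv
    simp only [hu_def]
    exact hdiv
  -- positivity of the quadratic value at u₀
  have hYpos := hpos r₀ hr₀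
  have hY'neg := hy' r₀ hr₀
  set w : ℝ := deriv y r₀ / y r₀ with hw_def
  have hwneg : w < 0 := div_neg_of_neg_of_pos hY'neg hYpos
  have hwu : w * u₀ = 1 := by
    have h1 : y r₀ ≠ 0 := ne_of_gt hYpos
    have h2 : deriv y r₀ ≠ 0 := ne_of_lt hY'neg
    rw [hw_def, hu₀_def, hu_def]
    field_simp
  set E : ℝ := Real.sqrt (m^2 * c₀^2 + 4*m) with hE_def
  have hEnn : 0 ≤ E := Real.sqrt_nonneg _
  have hE2 : E^2 = m^2 * c₀^2 + 4*m := Real.sq_sqrt (by positivity)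
  have h2' : w * (2*s₀) < -m * c₀ - E := (lt_div_iff₀ (by positivity)).mp hcon
  have hfa : 0 < -(2*s₀*w + m*c₀) - E := by linarith
  have hfb : 0 < -(2*s₀*w + m*c₀) + E := by linarith
  have h3 : 0 < (2*s₀*w + m*c₀)^2 - E^2 := by
    have hm2 := mul_pos hfa hfb
    have heq : (-(2*s₀*w + m*c₀) - E) * (-(2*s₀*w + m*c₀) + E)
        = (2*s₀*w + m*c₀)^2 - E^2 := by ring
    linarith [heq ▸ hm2]
  have h4 : 0 < 4*s₀^2*w^2 + 4*m*c₀*s₀*w - 4*m := by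
    have heq2 : (2*s₀*w + m*c₀)^2 - E^2 = 4*s₀^2*w^2 + 4*m*c₀*s₀*w - 4*m + (m^2*c₀^2 + 4*m - E^2) := by
      ring
    have hE2' : m^2*c₀^2 + 4*m - E^2 = 0 := by linarith [hE2]
    linarith [heq2, h3]
  have hb' : b₀ * s₀ = m * c₀ := by rw [hb₀_def]; field_simp
  have hk' : k₀ * s₀^2 = m := by rw [hk₀_def]; field_simp
  have hident : (1 + b₀*u₀ - k₀*u₀^2) * (4*s₀^2)
      = (4*s₀^2*w^2 + 4*m*c₀*s₀*w - 4*m) * u₀^2 := by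
    linear_combination (4*u₀*s₀)*hb' + (-4*u₀^2)*hk'
      + (-(4*s₀^2*(w*u₀+1)) - 4*m*c₀*s₀*u₀)*hwu
  have hu₀ne : u₀ ≠ 0 := ne_of_lt hu₀neg
  have hu₀sq : 0 < u₀^2 := by positivity
  have h6 : 0 < (1 + b₀*u₀ - k₀*u₀^2) * (4*s₀^2) := by
    rw [hident]; exact mul_pos h4 hu₀sq
  have hA : 0 < 1 + b₀ * u₀ - k₀ * u₀ ^ 2 := pos_of_mul_pos_left h6 (by positivity)
  set δ : ℝ := min 1 (1 + b₀ * u₀ - k₀ * u₀ ^ 2) with hδ_def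
  have hδpos : 0 < δ := lt_min one_pos hA
  have hδ1 : δ ≤ 1 := min_le_left _ _
  have hδA : δ ≤ 1 + b₀ * u₀ - k₀ * u₀ ^ 2 := min_le_right _ _
  -- key derivative bound
  have hkey : ∀ r, r₀ ≤ r → u₀ ≤ u r → δ ≤ deriv u r := by
    intro r hrr hu₀r
    have hr : (0:ℝ) < r := lt_of_lt_of_le hr₀ hrr
    have hd := hderivu r hr
    have hdr : deriv u r
        = 1 + m * (Real.cosh r / Real.sinh r) * u r - m / (Real.sinh r)^2 * (u r)^2 :=
      hd.deriv
    have hs : 0 < Real.sinh r := Real.sinh_pos_iff.mpr hr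
    have hsr : s₀ ≤ Real.sinh r := by
      rw [hs₀_def]
      exact Real.sinh_le_sinh.mpr hrr
    have hsinh0 : 0 ≤ Real.sinh (r - r₀) := by
      rcases eq_or_lt_of_le hrr with h | h
      · simp [← h]
      · exact (Real.sinh_pos_iff.mpr (by linarith)).le
    rw [Real.sinh_sub, ← hs₀_def, ← hc₀_def] at hsinh0
    have hbr : Real.cosh r / Real.sinh r ≤ c₀ / s₀ := by
      rw [div_le_div_iff₀ hs hs₀]
      linarith
    have hb_le : m * (Real.cosh r / Real.sinh r) ≤ b₀ := by
      rw [hb₀_def, mul_div_assoc]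
      exact mul_le_mul_of_nonneg_left hbr hm0.le
    have hk_le : m / (Real.sinh r)^2 ≤ k₀ := by
      rw [hk₀_def]
      gcongr
    have hur_neg : u r < 0 := huneg r hr
    have q1 : 0 ≤ (b₀ - m * (Real.cosh r / Real.sinh r)) * (-(u r)) :=
      mul_nonneg (by linarith) (by linarith)
    have q2 : 0 ≤ (k₀ - m / (Real.sinh r)^2) * (u r)^2 :=
      mul_nonneg (by linarith) (sq_nonneg _)
    have step1 : 1 + b₀ * u r - k₀ * (u r)^2
        ≤ 1 + m * (Real.cosh r / Real.sinh r) * u r - m / (Real.sinh r)^2 * (u r)^2 := by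
      linarith [q1, q2]
    have p1 : k₀ * (u r * u₀) * (u₀ - u r) ≤ 0 :=
      mul_nonpos_of_nonneg_of_nonpos
        (mul_nonneg hk₀pos.le (le_of_lt (mul_pos_of_neg_of_neg hur_neg hu₀neg)))
        (by linarith)
    have p2 : (u₀ - u r) * (1 - δ) ≤ 0 :=
      mul_nonpos_of_nonpos_of_nonneg (by linarith) (by linarith)
    have p3 : u r * ((1 + b₀ * u₀ - k₀ * u₀ ^ 2) - δ) ≤ 0 :=
      mul_nonpos_of_nonpos_of_nonneg hur_neg.le (by linarith)
    have hid : u₀ * ((1 + b₀ * u r - k₀ * (u r)^2) - δ)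
        = (u₀ - u r) * (1 - δ) + u r * ((1 + b₀ * u₀ - k₀ * u₀ ^ 2) - δ)
          + k₀ * (u r * u₀) * (u₀ - u r) := by ring
    have hle : u₀ * ((1 + b₀ * u r - k₀ * (u r)^2) - δ) ≤ 0 := by
      rw [hid]; linarith
    have step2 : δ ≤ 1 + b₀ * u r - k₀ * (u r)^2 := by
      by_contra hcon2
      push_neg at hcon2
      have : 0 < u₀ * ((1 + b₀ * u r - k₀ * (u r)^2) - δ) :=
        mul_pos_of_neg_of_neg hu₀neg (by linarith)
      linarith
    rw [hdr]; linarith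
  -- invariance: u stays above u₀
  have hinv : ∀ r, r₀ ≤ r → u₀ ≤ u r := by
    intro r hrr
    by_contra hbad
    push_neg at hbad
    have hne : r₀ ≠ r := by rintro rfl; exact lt_irrefl _ hbad
    have hrgt : r₀ < r := lt_of_le_of_ne hrr hne
    set C : Set ℝ := Icc r₀ r ∩ u ⁻¹' (Ici u₀) with hC_def
    have hCne : r₀ ∈ C := ⟨⟨le_refl _, hrr⟩, le_refl u₀⟩
    have hCbdd : BddAbove C := ⟨r, fun t ht => ht.1.2⟩
    have hucont : ContinuousOn u (Icc r₀ r) := by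
      intro t ht
      exact (hderivu t (mem_Ioi.mpr (lt_of_lt_of_le hr₀ ht.1))).continuousAt.continuousWithinAt
    have hCclosed : IsClosed C :=
      hucont.preimage_isClosed_of_isClosed isClosed_Icc isClosed_Ici
    set T : ℝ := sSup C with hT_def
    have hTC : T ∈ C := hCclosed.csSup_mem ⟨r₀, hCne⟩ hCbdd
    have hT1 : T ∈ Icc r₀ r := hTC.1
    have hT2 : u₀ ≤ u T := hTC.2
    have hTner : T ≠ r := by
      intro h
      rw [h] at hT2
      exact absurd hT2 (not_le.mpr hbad)
    have hTr : T < r := lt_of_le_of_ne hT1.2 hTner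
    have hTpos : (0:ℝ) < T := lt_of_lt_of_le hr₀ hT1.1
    have hd := hderivu T (mem_Ioi.mpr hTpos)
    have hdpos : 0 < (1 + m * (Real.cosh T / Real.sinh T) * u T
        - m / (Real.sinh T)^2 * (u T)^2) := by
      have hval := hd.deriv
      have := hkey T hT1.1 hT2
      rw [hval] at this
      linarith
    have hev := eventually_gt_right_aux hd hdpos
    have hmem : Ioc T r ∈ nhdsWithin T (Ioi T) :=
      Ioc_mem_nhdsGT_of_mem ⟨le_refl T, hTr⟩
    obtain ⟨s, hs1, hs2⟩ := (hev.and (eventually_of_mem hmem (fun _ h => h))).exists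
    have hsC : s ∈ C := ⟨⟨le_trans hT1.1 hs2.1.le, hs2.2⟩, le_trans hT2 hs1.le⟩
    have : s ≤ T := le_csSup hCbdd hsC
    exact absurd this (not_le.mpr hs2.1)
  -- linear growth leads to a contradiction
  set g : ℝ → ℝ := fun t => u t - δ * t with hg_def
  have hgd : ∀ t ∈ Ioi r₀, HasDerivAt g (deriv u t - δ) t := by
    intro t ht
    have htpos : (0:ℝ) < t := lt_trans hr₀ ht
    have hd := hderivu t (mem_Ioi.mpr htpos)
    have hval := hd.deriv
    rw [← hval] at hd
    have hlin : HasDerivAt (fun s => δ * s) δ t := by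
      simpa using (hasDerivAt_id t).const_mul δ
    exact hd.sub hlin
  have hgc : ContinuousOn g (Ici r₀) := by
    intro t ht
    have htpos : (0:ℝ) < t := lt_of_lt_of_le hr₀ ht
    have hd := hderivu t (mem_Ioi.mpr htpos)
    exact (hd.continuousAt.sub
      ((continuous_const.mul continuous_id).continuousAt)).continuousWithinAt
  have hmono : MonotoneOn g (Ici r₀) := by
    apply monotoneOn_of_deriv_nonneg (convex_Ici r₀) hgc
    · intro t ht
      rw [interior_Ici] at ht
      exact (hgd t ht).differentiableAt.differentiableWithinAt
    · intro t ht
      rw [interior_Ici] at ht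
      rw [(hgd t ht).deriv]
      have := hkey t ht.le (hinv t ht.le)
      linarith
  set R : ℝ := r₀ + (1 - u₀) / δ with hR_def
  have hR1 : r₀ ≤ R := by
    rw [hR_def]
    have : 0 ≤ (1 - u₀) / δ := div_nonneg (by linarith) hδpos.le
    linarith
  have hgle : g r₀ ≤ g R := hmono self_mem_Ici (mem_Ici.mpr hR1) hR1
  have huR : u R ≥ u₀ + δ * (R - r₀) := by
    rw [hg_def] at hgle
    simp only at hgle
    linarith
  have hδR : δ * (R - r₀) = 1 - u₀ := by
    rw [hR_def]
    field_simp
    ring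
  have huRneg : u R < 0 := huneg R (lt_of_lt_of_le hr₀ hR1)
  rw [hδR] at huR
  linarith
end

section
/- Let n ≥ 2 be an integer, f = sinh, and let y be a twice differentiable positive solution on (0,∞) of y'' + (n-1)(f'/f)y' - (n-1)y/f² = 0 with y → +∞ at 0⁺, y → 0 at +∞, and y' < 0. Then x = y'/y is increasing on (0,∞) and x(r) → -∞ as r → 0⁺. -/
open Real Set Filter Topology

lemma invar {f f' : ℝ → ℝ} {a m δ : ℝ} (hδ : 0 < δ)
    (hd : ∀ t, a ≤ t → HasDerivAt f (f' t) t)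
    (hslope : ∀ t, a ≤ t → m ≤ f t → δ ≤ f' t)
    (ha : m ≤ f a) : ∀ t, a ≤ t → m ≤ f t := by
  intro t₁ ht₁
  by_contra hcon
  push_neg at hcon
  have hat₁ : a < t₁ := lt_of_le_of_ne ht₁ (by rintro rfl; exact absurd ha (not_le.2 hcon))
  set S : Set ℝ := {t | t ∈ Icc a t₁ ∧ m ≤ f t} with hS
  have hne : a ∈ S := ⟨⟨le_refl a, le_of_lt hat₁⟩, ha⟩
  have hbdd : BddAbove S := ⟨t₁, fun t ht => ht.1.2⟩
  set c := sSup S with hcdef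
  have hac : a ≤ c := le_csSup hbdd hne
  have hct₁ : c ≤ t₁ := csSup_le ⟨a, hne⟩ fun t ht => ht.1.2
  have hfc : m ≤ f c := by
    have hclos : c ∈ closure S := csSup_mem_closure ⟨a, hne⟩ hbdd
    obtain ⟨u, hu, hulim⟩ := mem_closure_iff_seq_limit.1 hclos
    have hcont : ContinuousAt f c := (hd c hac).continuousAt
    exact ge_of_tendsto (hcont.tendsto.comp hulim) (Eventually.of_forall fun k => (hu k).2)
  have hct : c < t₁ := lt_of_le_of_ne hct₁ (by intro h; rw [h] at hfc; linarith)
  have hpos : (0:ℝ) < f' c := lt_of_lt_of_le hδ (hslope c hac hfc)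
  have htend : Tendsto (slope f c) (𝓝[>] c) (𝓝 (f' c)) :=
    (hasDerivAt_iff_tendsto_slope.1 (hd c hac)).mono_left
      (nhdsWithin_mono c fun t ht => (Set.mem_compl_singleton_iff).2 (ne_of_gt ht))
  have hev : ∀ᶠ t in 𝓝[>] c, 0 < slope f c t := htend.eventually (eventually_gt_nhds hpos)
  have hev2 : ∀ᶠ t in 𝓝[>] c, t < t₁ :=
    mem_nhdsWithin_of_mem_nhds (Iio_mem_nhds hct)
  have hev3 : ∀ᶠ t in 𝓝[>] c, c < t := eventually_mem_nhdsWithin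
  obtain ⟨t, h1, h2, h3⟩ := (hev.and (hev2.and hev3)).exists
  have hft : m < f t := by
    have hslopepos : 0 < (f t - f c) / (t - c) := by
      rw [slope_def_field] at h1; exact h1
    have h4 : 0 < t - c := sub_pos.2 h3
    rcases div_pos_iff.1 hslopepos with ⟨h5, _⟩ | ⟨_, h6⟩
    · linarith
    · linarith
  have : t ∈ S := ⟨⟨le_trans hac (le_of_lt h3), le_of_lt h2⟩, le_of_lt hft⟩
  exact absurd (le_csSup hbdd this) (not_le.2 h3)

lemma riccati_blowup {x b c : ℝ → ℝ} {r₀ B C : ℝ}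
    (hxneg : ∀ t, r₀ ≤ t → x t < 0)
    (hd : ∀ t, r₀ ≤ t → HasDerivAt x (-((x t)^2 + b t * x t - c t)) t)
    (hb : ∀ t, r₀ ≤ t → b t ≤ B) (hB : 0 < B)
    (hc : ∀ t, r₀ ≤ t → c t ≤ C) (hC : 0 < C)
    (hQ : 0 < (x r₀)^2 + B * x r₀ - C) : False := by
  have hx₀ : x r₀ < 0 := hxneg r₀ le_rfl
  have hx₀ne : x r₀ ≠ 0 := ne_of_lt hx₀
  have hx₀2 : (0:ℝ) < (x r₀)^2 := by positivity
  have hδ : 0 < ((x r₀)^2 + B * x r₀ - C) / (x r₀)^2 := div_pos hQ hx₀2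
  set δ : ℝ := ((x r₀)^2 + B * x r₀ - C) / (x r₀)^2 with hδdef
  have hd' : ∀ t, r₀ ≤ t → HasDerivAt (fun s => (x s)⁻¹)
      (((x t)^2 + b t * x t - c t) / (x t)^2) t := by
    intro t ht
    have hxt : x t < 0 := hxneg t ht
    have h5 := (hd t ht).inv (ne_of_lt hxt)
    have e : ((x t)^2 + b t * x t - c t) / (x t)^2 = - -((x t)^2 + b t * x t - c t) / (x t)^2 := by ring
    rw [e]; exact h5
  have hslope : ∀ t, r₀ ≤ t → (x r₀)⁻¹ ≤ (x t)⁻¹ →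
      δ ≤ ((x t)^2 + b t * x t - c t) / (x t)^2 := by
    intro t ht hψt
    have hxt : x t < 0 := hxneg t ht
    have hxtne : x t ≠ 0 := ne_of_lt hxt
    have hxt2 : (0:ℝ) < (x t)^2 := by positivity
    have hprod : 0 < x t * x r₀ := mul_pos_of_neg_of_neg hxt hx₀
    have hle : x t ≤ x r₀ := by
      have h8 := mul_le_mul_of_nonneg_left hψt (le_of_lt hprod)
      have e1 : x t * x r₀ * (x r₀)⁻¹ = x t := by field_simp
      have e2 : x t * x r₀ * (x t)⁻¹ = x r₀ := by field_simp
      rw [e1, e2] at h8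
      exact h8
    have hbt := hb t ht
    have hct := hc t ht
    rw [hδdef, div_le_div_iff₀ hx₀2 hxt2]
    have hQt : (x t)^2 + B * x t - C ≤ (x t)^2 + b t * x t - c t := by
      have : b t * x t ≥ B * x t := by nlinarith
      linarith
    have hfac : 0 ≤ (x r₀ - x t) * (B * (x t * x r₀) - C * (x t + x r₀)) := by
      apply mul_nonneg (by linarith)
      nlinarith
    have hmain : ((x r₀)^2 + B * x r₀ - C) * (x t)^2
        ≤ ((x t)^2 + B * x t - C) * (x r₀)^2 := by nlinarith [hfac]
    calc ((x r₀)^2 + B * x r₀ - C) * (x t)^2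
        ≤ ((x t)^2 + B * x t - C) * (x r₀)^2 := hmain
      _ ≤ ((x t)^2 + b t * x t - c t) * (x r₀)^2 :=
          mul_le_mul_of_nonneg_right hQt hx₀2.le
  have hinv : ∀ t, r₀ ≤ t → (x r₀)⁻¹ ≤ (x t)⁻¹ :=
    invar hδ hd' hslope le_rfl
  -- linear growth
  have hψ₀neg : (x r₀)⁻¹ < 0 := inv_lt_zero.2 hx₀
  set R : ℝ := r₀ + (1 - (x r₀)⁻¹) / δ with hRdef
  have hRr₀ : r₀ ≤ R := by
    have : 0 < (1 - (x r₀)⁻¹) / δ := div_pos (by linarith) hδ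
    rw [hRdef]; linarith
  have hg : MonotoneOn (fun t => (x t)⁻¹ - δ * t) (Ici r₀) := by
    apply monotoneOn_of_deriv_nonneg (convex_Ici r₀)
    · intro t ht
      exact ((hd' t ht).sub ((hasDerivAt_id t).const_mul δ)).continuousAt.continuousWithinAt
    · intro t ht
      rw [interior_Ici] at ht
      exact ((hd' t ht.le).sub ((hasDerivAt_id t).const_mul δ)).differentiableAt.differentiableWithinAt
    · intro t ht
      rw [interior_Ici] at ht
      have h8 : HasDerivAt (fun s => (x s)⁻¹ - δ * s)
          (((x t)^2 + b t * x t - c t) / (x t)^2 - δ * 1) t :=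
        (hd' t ht.le).sub ((hasDerivAt_id t).const_mul δ)
      rw [h8.deriv]
      have := hslope t ht.le (hinv t ht.le)
      linarith
  have h9 := hg self_mem_Ici (mem_Ici.2 hRr₀) hRr₀
  simp only [] at h9
  have hδR : δ * R = δ * r₀ + (1 - (x r₀)⁻¹) := by
    rw [hRdef]; field_simp
  have hψR : 0 < (x R)⁻¹ := by nlinarith [h9]
  have : (x R)⁻¹ < 0 := inv_lt_zero.2 (hxneg R hRr₀)
  linarith

theorem stmt5 (n : ℕ) (hn : 2 ≤ n) (y : ℝ → ℝ)
    (hpos : ∀ r ∈ Ioi (0 : ℝ), 0 < y r)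
    (hy1 : ∀ r ∈ Ioi (0 : ℝ), DifferentiableAt ℝ y r)
    (hy2 : ∀ r ∈ Ioi (0 : ℝ), DifferentiableAt ℝ (deriv y) r)
    (hode : ∀ r ∈ Ioi (0 : ℝ),
      deriv (deriv y) r + (n - 1 : ℝ) * (Real.cosh r / Real.sinh r) * deriv y r
        - (n - 1 : ℝ) * y r / (Real.sinh r) ^ 2 = 0)
    (hlim0 : Tendsto y (nhdsWithin 0 (Ioi 0)) atTop)
    (hliminf : Tendsto y atTop (nhds 0))
    (hy' : ∀ r ∈ Ioi (0 : ℝ), deriv y r < 0)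
    (x : ℝ → ℝ) (hx : ∀ r, x r = deriv y r / y r) :
    MonotoneOn x (Ioi 0) ∧ Tendsto x (nhdsWithin 0 (Ioi 0)) atBot := by
  have hn1 : (1:ℝ) ≤ (n:ℝ) - 1 := by
    have : (2:ℝ) ≤ (n:ℝ) := by exact_mod_cast hn
    linarith
  have hs : ∀ r : ℝ, 0 < r → 0 < Real.sinh r := fun r hr => Real.sinh_pos_iff.2 hr
  have hxneg : ∀ r : ℝ, 0 < r → x r < 0 := by
    intro r hr; rw [hx]; exact div_neg_of_neg_of_pos (hy' r hr) (hpos r hr)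
  have hxderiv : ∀ r : ℝ, 0 < r → HasDerivAt x
      (-((x r)^2 + (fun t => ((n:ℝ)-1) * (Real.cosh t / Real.sinh t)) r * x r
          - (fun t => ((n:ℝ)-1) / (Real.sinh t)^2) r)) r := by
    intro r hr
    have hy0 : y r ≠ 0 := ne_of_gt (hpos r hr)
    have hs0 : Real.sinh r ≠ 0 := ne_of_gt (hs r hr)
    have h1 : HasDerivAt y (deriv y r) r := (hy1 r hr).hasDerivAt
    have h2 : HasDerivAt (deriv y) (deriv (deriv y) r) r := (hy2 r hr).hasDerivAt
    have h3 : HasDerivAt (fun s => deriv y s / y s)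
        ((deriv (deriv y) r * y r - deriv y r * deriv y r) / (y r)^2) r := h2.div h1 hy0
    have h4 : (fun s => deriv y s / y s) = x := by funext t; rw [hx]
    rw [h4] at h3
    have heq : deriv (deriv y) r =
        ((n:ℝ)-1) * y r / (Real.sinh r)^2
          - ((n:ℝ)-1) * (Real.cosh r / Real.sinh r) * deriv y r := by
      have := hode r hr; linarith
    have hval : -((x r)^2 + ((n:ℝ)-1) * (Real.cosh r / Real.sinh r) * x r
          - ((n:ℝ)-1) / (Real.sinh r)^2)
        = (deriv (deriv y) r * y r - deriv y r * deriv y r) / (y r)^2 := by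
      rw [heq, hx]
      field_simp
      ring
    simp only []
    rw [hval]
    exact h3
  have key : ∀ r : ℝ, 0 < r →
      (x r)^2 + ((n:ℝ)-1) * (Real.cosh r / Real.sinh r) * x r
        - ((n:ℝ)-1) / (Real.sinh r)^2 ≤ 0 := by
    intro r₀ hr₀
    by_contra hQ
    push_neg at hQ
    refine riccati_blowup (x := x) (b := fun t => ((n:ℝ)-1) * (Real.cosh t / Real.sinh t))
      (c := fun t => ((n:ℝ)-1) / (Real.sinh t)^2) (r₀ := r₀)
      (B := ((n:ℝ)-1) * (Real.cosh r₀ / Real.sinh r₀))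
      (C := ((n:ℝ)-1) / (Real.sinh r₀)^2)
      (fun t ht => hxneg t (lt_of_lt_of_le hr₀ ht))
      (fun t ht => hxderiv t (lt_of_lt_of_le hr₀ ht))
      ?_ ?_ ?_ ?_ hQ
    · intro t ht
      have ht0 : (0:ℝ) < t := lt_of_lt_of_le hr₀ ht
      have hst : 0 < Real.sinh t := hs t ht0
      have hsr : 0 < Real.sinh r₀ := hs r₀ hr₀
      apply mul_le_mul_of_nonneg_left _ (by linarith : (0:ℝ) ≤ (n:ℝ)-1)
      rw [div_le_div_iff₀ hst hsr]
      have h5 : 0 ≤ Real.sinh (t - r₀) := Real.sinh_nonneg_iff.2 (by linarith)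
      rw [Real.sinh_sub] at h5
      nlinarith
    · exact mul_pos (by linarith) (div_pos (Real.cosh_pos r₀) (hs r₀ hr₀))
    · intro t ht
      have ht0 : (0:ℝ) < t := lt_of_lt_of_le hr₀ ht
      have hsr : 0 < Real.sinh r₀ := hs r₀ hr₀
      apply div_le_div_of_nonneg_left (by linarith) (pow_pos hsr 2)
      have := Real.sinh_le_sinh.2 ht
      nlinarith [hs t ht0]
    · exact div_pos (by linarith) (pow_pos (hs r₀ hr₀) 2)
  have hmono : MonotoneOn x (Ioi 0) := by
    apply monotoneOn_of_deriv_nonneg (convex_Ioi 0)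
    · intro r hr; exact (hxderiv r hr).continuousAt.continuousWithinAt
    · intro r hr
      rw [interior_Ioi] at hr
      exact (hxderiv r hr).differentiableAt.differentiableWithinAt
    · intro r hr
      rw [interior_Ioi] at hr
      rw [(hxderiv r hr).deriv]
      have := key r hr
      simp only []
      linarith
  refine ⟨hmono, ?_⟩
  by_contra hnot
  rw [tendsto_atBot] at hnot
  push_neg at hnot
  obtain ⟨M, hM⟩ := hnot
  have hlb : ∀ r : ℝ, 0 < r → M ≤ x r := by
    intro r hr
    obtain ⟨r', h1, h2⟩ := (hM.and_eventually
      (eventually_of_mem (Ioo_mem_nhdsGT hr) fun a ha => ha)).exists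
    exact le_trans h1.le (hmono (mem_Ioi.2 h2.1) (mem_Ioi.2 hr) h2.2.le)
  -- y is then bounded above near 0
  have humono : MonotoneOn (fun r => y r * Real.exp (-M * r)) (Ioi 0) := by
    apply monotoneOn_of_deriv_nonneg (convex_Ioi 0)
    · intro r hr
      exact ((hy1 r hr).hasDerivAt.mul
        (((hasDerivAt_id r).const_mul (-M)).exp)).continuousAt.continuousWithinAt
    · intro r hr
      rw [interior_Ioi] at hr
      exact ((hy1 r hr).hasDerivAt.mul
        (((hasDerivAt_id r).const_mul (-M)).exp)).differentiableAt.differentiableWithinAt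
    · intro r hr
      rw [interior_Ioi] at hr
      have hder : HasDerivAt (fun r => y r * Real.exp (-M * r))
          (deriv y r * Real.exp (-M * r) + y r * (Real.exp (-M * r) * (-M * 1))) r :=
        (hy1 r hr).hasDerivAt.mul (((hasDerivAt_id r).const_mul (-M)).exp)
      rw [hder.deriv]
      have hyr := hpos r hr
      have hxr := hlb r hr
      have hyx : deriv y r = x r * y r := by
        rw [hx r]; field_simp
      rw [hyx]
      have h6 : 0 ≤ Real.exp (-M * r) * (y r * (x r - M)) :=
        mul_nonneg (Real.exp_pos _).le (mul_nonneg hyr.le (sub_nonneg.2 hxr))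
      nlinarith [h6]
  set K : ℝ := y 1 * Real.exp (2 * |M|) with hKdef
  have hbound : ∀ r : ℝ, 0 < r → r ≤ 1 → y r ≤ K := by
    intro r hr hr1
    have hur : y r * Real.exp (-M * r) ≤ y 1 * Real.exp (-M * 1) :=
      humono (mem_Ioi.2 hr) (mem_Ioi.2 one_pos) hr1
    have e1 : Real.exp (-|M|) ≤ Real.exp (-M * r) :=
      Real.exp_le_exp.2 (by nlinarith [le_abs_self M, abs_nonneg M])
    have e2 : (0:ℝ) < Real.exp (-|M|) := Real.exp_pos _
    have e3 : y r * Real.exp (-|M|) ≤ y 1 * Real.exp (-M * 1) :=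
      le_trans (mul_le_mul_of_nonneg_left e1 (hpos r hr).le) hur
    have e4 : y 1 * Real.exp (-M * 1) ≤ K * Real.exp (-|M|) := by
      rw [hKdef, mul_assoc, ← Real.exp_add]
      apply mul_le_mul_of_nonneg_left _ (hpos 1 (mem_Ioi.2 one_pos)).le
      apply Real.exp_le_exp.2
      have := neg_le_abs M
      have := abs_nonneg M
      linarith
    exact (mul_le_mul_iff_left₀ e2).1 (le_trans e3 e4)
  obtain ⟨r, hKr, hrmem⟩ := ((hlim0.eventually_gt_atTop K).and
    (eventually_of_mem (Ioo_mem_nhdsGT one_pos) fun a ha => ha)).exists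
  exact absurd (hbound r hrmem.1 hrmem.2.le) (not_le.2 hKr)
end

section
/- Let n ≥ 2 be an integer and let y be a twice differentiable positive solution on (0,∞) of y'' + (n-1)(cosh r/sinh r)·y' - (n-1)y/sinh²r = 0 with y → +∞ at 0⁺, y → 0 at +∞, and y' < 0. Then z(r) = sinh(r)·y'(r)/y(r) satisfies z(r) ≤ Z₁(r) for all r > 0, where Z₁(r) = [-(n-2)cosh r - √((n-2)²cosh²r + 4(n-1))]/2. -/
open Real Set Filter Topology

lemma barrier_aux {f : ℝ → ℝ} {r₀ : ℝ} (h0 : f r₀ = 0)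
    (hc : ∀ r ∈ Ici r₀, ContinuousAt f r)
    (hd : ∀ r ∈ Ici r₀, f r = 0 → ∃ f', HasDerivAt f f' r ∧ 0 < f') :
    ∀ r ∈ Ici r₀, 0 ≤ f r := by
  intro r hr
  by_contra hneg
  push_neg at hneg
  set S : Set ℝ := {t | t ∈ Icc r₀ r ∧ f t < 0} with hS
  have hrS : r ∈ S := ⟨⟨hr, le_refl r⟩, hneg⟩
  have hSne : S.Nonempty := ⟨r, hrS⟩
  have hSbd : BddBelow S := ⟨r₀, fun t ht => ht.1.1⟩
  set T := sInf S with hTdef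
  have hT0 : r₀ ≤ T := le_csInf hSne fun t ht => ht.1.1
  have hTr : T ≤ r := csInf_le hSbd hrS
  have hTmem : T ∈ Ici r₀ := hT0
  have hfT_le : f T ≤ 0 := by
    by_contra hpos
    push_neg at hpos
    have hcT := hc T hTmem
    have hmem : f ⁻¹' Ioi 0 ∈ 𝓝 T := hcT (Ioi_mem_nhds hpos)
    obtain ⟨δ, hδ, hball⟩ := Metric.mem_nhds_iff.mp hmem
    obtain ⟨s, hsS, hs⟩ := exists_lt_of_csInf_lt hSne (show sInf S < T + δ by linarith)
    have hTs : T ≤ s := csInf_le hSbd hsS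
    have : f s ∈ Ioi (0:ℝ) := hball (by
      rw [Metric.mem_ball, Real.dist_eq, abs_lt]; constructor <;> linarith)
    have := hsS.2
    simp only [mem_Ioi] at *
    linarith
  have hfT_ge : 0 ≤ f T := by
    rcases eq_or_lt_of_le hT0 with h | h
    · rw [← h]; exact h0.ge
    · by_contra hneg2
      push_neg at hneg2
      have hcT := hc T hTmem
      have hmem : f ⁻¹' Iio 0 ∈ 𝓝 T := hcT (Iio_mem_nhds hneg2)
      obtain ⟨δ, hδ, hball⟩ := Metric.mem_nhds_iff.mp hmem
      set t := max r₀ (T - δ/2) with ht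
      have ht1 : r₀ ≤ t := le_max_left _ _
      have ht2 : t < T := max_lt h (by linarith)
      have ht3 : T - δ/2 ≤ t := le_max_right _ _
      have hft : f t ∈ Iio (0:ℝ) := hball (by
        rw [Metric.mem_ball, Real.dist_eq, abs_lt]; constructor <;> linarith)
      have : T ≤ t := csInf_le hSbd ⟨⟨ht1, le_trans ht2.le hTr⟩, hft⟩
      linarith
  have hfT : f T = 0 := le_antisymm hfT_le hfT_ge
  obtain ⟨f', hder, hf'⟩ := hd T hTmem hfT
  have hslope : Tendsto (slope f T) (𝓝[≠] T) (𝓝 f') := hasDerivAt_iff_tendsto_slope.mp hder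
  have h2 : ∀ᶠ s in 𝓝[≠] T, 0 < slope f T s := hslope.eventually (eventually_gt_nhds hf')
  have h3 : ∀ᶠ s in 𝓝[>] T, 0 < f s := by
    have h4 := h2.filter_mono (nhdsWithin_mono T fun s hs => ne_of_gt hs)
    filter_upwards [h4, self_mem_nhdsWithin] with s hs hs'
    rw [slope_def_field, hfT, sub_zero] at hs
    have hsT : 0 < s - T := sub_pos.mpr hs'
    rcases div_pos_iff.mp hs with ⟨h1, _⟩ | ⟨_, h2'⟩
    · exact h1
    · linarith
  obtain ⟨u, hu, hIoc⟩ := mem_nhdsGT_iff_exists_Ioc_subset.mp h3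
  have hTltr : T < r := lt_of_le_of_ne hTr (fun h => by rw [h] at hfT; linarith)
  have hbound : T < min u r := lt_min hu hTltr
  obtain ⟨s, hsS, hs⟩ := exists_lt_of_csInf_lt hSne hbound
  have hTs : T ≤ s := csInf_le hSbd hsS
  have hTs' : T < s := lt_of_le_of_ne hTs (fun h => by
    rw [← h] at hsS; exact absurd hfT (ne_of_lt hsS.2))
  have hfspos : 0 < f s := hIoc ⟨hTs', le_of_lt (lt_of_lt_of_le hs (min_le_left _ _))⟩
  linarith [hsS.2]

lemma quad_neg_aux {b m a : ℝ} (hb : 0 ≤ b) (hm : 0 < m)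
    (h1 : (-b - Real.sqrt (b ^ 2 + 4 * m)) / 2 < a) (h2 : a < 0) :
    0 < -(a ^ 2) - b * a + m := by
  set s := Real.sqrt (b ^ 2 + 4 * m) with hs
  have hs0 : 0 ≤ s := Real.sqrt_nonneg _
  have hs2 : s ^ 2 = b ^ 2 + 4 * m := Real.sq_sqrt (by positivity)
  have hsb : b < s := by nlinarith
  nlinarith [mul_pos (show 0 < 2 * a + b + s by linarith)
    (show 0 < s - (2 * a + b) by linarith)]

theorem stmt6 (n : ℕ) (hn : 2 ≤ n) (y : ℝ → ℝ)
    (hpos : ∀ r ∈ Ioi (0 : ℝ), 0 < y r)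
    (hy1 : ∀ r ∈ Ioi (0 : ℝ), DifferentiableAt ℝ y r)
    (hy2 : ∀ r ∈ Ioi (0 : ℝ), DifferentiableAt ℝ (deriv y) r)
    (hode : ∀ r ∈ Ioi (0 : ℝ),
      deriv (deriv y) r + (n - 1 : ℝ) * (Real.cosh r / Real.sinh r) * deriv y r
        - (n - 1 : ℝ) * y r / (Real.sinh r) ^ 2 = 0)
    (hlim0 : Tendsto y (nhdsWithin 0 (Ioi 0)) atTop)
    (hliminf : Tendsto y atTop (nhds 0))
    (hy' : ∀ r ∈ Ioi (0 : ℝ), deriv y r < 0)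
    (z Z₁ : ℝ → ℝ)
    (hz : ∀ r, z r = Real.sinh r * deriv y r / y r)
    (hZ : ∀ r, Z₁ r = (-(n - 2 : ℝ) * Real.cosh r
        - Real.sqrt ((n - 2 : ℝ) ^ 2 * (Real.cosh r) ^ 2 + 4 * (n - 1 : ℝ))) / 2) :
    ∀ r ∈ Ioi (0 : ℝ), z r ≤ Z₁ r := by
  have hn2 : (2 : ℝ) ≤ (n : ℝ) := by exact_mod_cast hn
  -- the Riccati equation for z
  have riccati : ∀ t ∈ Ioi (0 : ℝ), HasDerivAt z
      ((-(z t) ^ 2 - ((n : ℝ) - 2) * Real.cosh t * z t + ((n : ℝ) - 1)) / Real.sinh t) t := by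
    intro t ht
    have hst : 0 < Real.sinh t := Real.sinh_pos_iff.mpr ht
    have hyt : 0 < y t := hpos t ht
    have h1 : HasDerivAt (fun u => Real.sinh u * deriv y u)
        (Real.cosh t * deriv y t + Real.sinh t * deriv (deriv y) t) t :=
      (Real.hasDerivAt_sinh t).mul (hy2 t ht).hasDerivAt
    have h2 := h1.div (hy1 t ht).hasDerivAt hyt.ne'
    have hzfun : z = fun u => Real.sinh u * deriv y u / y u := funext hz
    rw [hzfun]
    refine h2.congr_deriv ?_
    have hB : deriv (deriv y) t = ((n : ℝ) - 1) * y t / Real.sinh t ^ 2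
        - ((n : ℝ) - 1) * (Real.cosh t / Real.sinh t) * deriv y t := by
      have := hode t ht; linarith
    rw [hB]
    field_simp
    ring
  intro r₀ hr₀
  by_contra hcon
  push_neg at hcon
  set a := z r₀ with ha
  have hs0 : 0 < Real.sinh r₀ := Real.sinh_pos_iff.mpr hr₀
  have haneg : a < 0 := by
    rw [ha, hz]
    exact div_neg_of_neg_of_pos (mul_neg_of_pos_of_neg hs0 (hy' r₀ hr₀)) (hpos r₀ hr₀)
  -- Z₁ is antitone past r₀
  have hZmono : ∀ t, r₀ ≤ t → Z₁ t ≤ Z₁ r₀ := by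
    intro t htr
    rw [hZ, hZ]
    have hcc : Real.cosh r₀ ≤ Real.cosh t := by
      have h1 : |r₀| ≤ |t| := by
        rw [abs_of_pos hr₀, abs_of_pos (lt_of_lt_of_le hr₀ htr)]; exact htr
      exact Real.cosh_le_cosh.mpr h1
    have h1 : ((n : ℝ) - 2) * Real.cosh r₀ ≤ ((n : ℝ) - 2) * Real.cosh t :=
      mul_le_mul_of_nonneg_left hcc (by linarith)
    have h2 : Real.sqrt (((n : ℝ) - 2) ^ 2 * Real.cosh r₀ ^ 2 + 4 * ((n : ℝ) - 1))
        ≤ Real.sqrt (((n : ℝ) - 2) ^ 2 * Real.cosh t ^ 2 + 4 * ((n : ℝ) - 1)) := by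
      apply Real.sqrt_le_sqrt
      have h0 := Real.cosh_pos (x := r₀)
      nlinarith [mul_le_mul_of_nonneg_left (mul_self_le_mul_self h0.le hcc) (sq_nonneg ((n:ℝ)-2)), sq_nonneg ((n:ℝ)-2)]
    linarith
  -- forward invariance: z stays ≥ a
  have hzge : ∀ t ∈ Ici r₀, a ≤ z t := by
    have hb := barrier_aux (f := fun t => z t - a) (r₀ := r₀) (by simp [ha])
      (fun t ht => ((riccati t (mem_Ioi.mpr (lt_of_lt_of_le (mem_Ioi.mp hr₀) (mem_Ici.mp ht)))).continuousAt.sub continuousAt_const))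
      ?_
    · intro t ht; exact sub_nonneg.mp (hb t ht)
    · intro t ht heq
      have ht0 : (0 : ℝ) < t := lt_of_lt_of_le hr₀ ht
      have hst : 0 < Real.sinh t := Real.sinh_pos_iff.mpr ht0
      have hza : z t = a := by have h := heq; simp only [sub_eq_zero] at h; exact h
      have hder := (riccati t ht0).sub_const a
      rw [hza] at hder
      refine ⟨_, hder, ?_⟩
      apply div_pos _ hst
      have hbnn : (0 : ℝ) ≤ ((n : ℝ) - 2) * Real.cosh t :=
        mul_nonneg (by linarith) (Real.cosh_pos t).le
      have hZ1a : (-(((n : ℝ) - 2) * Real.cosh t)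
          - Real.sqrt ((((n : ℝ) - 2) * Real.cosh t) ^ 2 + 4 * ((n : ℝ) - 1))) / 2 < a := by
        have heqsq : (((n : ℝ) - 2) * Real.cosh t) ^ 2 + 4 * ((n : ℝ) - 1)
            = ((n : ℝ) - 2) ^ 2 * Real.cosh t ^ 2 + 4 * ((n : ℝ) - 1) := by ring
        rw [heqsq]
        have := hZmono t ht
        rw [hZ t] at this
        calc (-(((n : ℝ) - 2) * Real.cosh t)
            - Real.sqrt (((n : ℝ) - 2) ^ 2 * Real.cosh t ^ 2 + 4 * ((n : ℝ) - 1))) / 2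
            = Z₁ t := by rw [hZ t]; ring_nf
          _ ≤ Z₁ r₀ := hZmono t ht
          _ < a := hcon
      have := quad_neg_aux hbnn (show (0:ℝ) < (n : ℝ) - 1 by linarith) hZ1a haneg
      nlinarith
  -- integrate to get a positive lower bound for y at infinity
  set G : ℝ → ℝ := fun t => Real.log (Real.sinh (t / 2)) - Real.log (Real.cosh (t / 2)) with hGdef
  have hGder : ∀ t ∈ Ioi (0 : ℝ), HasDerivAt G (1 / Real.sinh t) t := by
    intro t ht
    have ht2 : (0 : ℝ) < t / 2 := by simpa using (half_pos (mem_Ioi.mp ht))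
    have hsh : 0 < Real.sinh (t / 2) := Real.sinh_pos_iff.mpr ht2
    have hch : 0 < Real.cosh (t / 2) := Real.cosh_pos _
    have h1 : HasDerivAt (fun u : ℝ => Real.sinh (u / 2)) (Real.cosh (t / 2) * (1 / 2)) t := by
      have := (Real.hasDerivAt_sinh (t / 2)).comp t ((hasDerivAt_id t).div_const 2)
      simpa [Function.comp_def] using this
    have h2 : HasDerivAt (fun u : ℝ => Real.cosh (u / 2)) (Real.sinh (t / 2) * (1 / 2)) t := by
      have := (Real.hasDerivAt_cosh (t / 2)).comp t ((hasDerivAt_id t).div_const 2)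
      simpa [Function.comp_def] using this
    have h3 := (h1.log hsh.ne').sub (h2.log hch.ne')
    refine h3.congr_deriv ?_
    have hst : Real.sinh t = 2 * Real.sinh (t / 2) * Real.cosh (t / 2) := by
      have h := Real.sinh_two_mul (t / 2)
      have h2' : (2 : ℝ) * (t / 2) = t := by ring
      rw [h2'] at h
      linarith
    have hid := Real.cosh_sq_sub_sinh_sq (t / 2)
    rw [hst]
    field_simp
    nlinarith [hid, mul_pos hsh hch, sq_nonneg (Real.sinh (t/2)), sq_nonneg (Real.cosh (t/2))]
  have hGle : ∀ t, 0 < t → G t ≤ 0 := by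
    intro t ht
    have ht2 : (0 : ℝ) < t / 2 := half_pos ht
    have hsh : 0 < Real.sinh (t / 2) := Real.sinh_pos_iff.mpr ht2
    have hlt : Real.sinh (t / 2) < Real.cosh (t / 2) := by
      have := Real.cosh_sub_sinh (t / 2)
      have := Real.exp_pos (-(t / 2))
      linarith [Real.cosh_sub_sinh (t / 2), Real.exp_pos (-(t / 2))]
    have := Real.log_le_log hsh hlt.le
    simp only [hGdef]
    linarith
  set F : ℝ → ℝ := fun u => Real.log (y u) - a * G u with hF
  have hFder : ∀ u ∈ Ioi (0 : ℝ), HasDerivAt F ((z u - a) / Real.sinh u) u := by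
    intro u hu
    have hyu : 0 < y u := hpos u hu
    have hsu : 0 < Real.sinh u := Real.sinh_pos_iff.mpr hu
    have h1 := ((hy1 u hu).hasDerivAt).log hyu.ne'
    have h2 := (hGder u hu).const_mul a
    have h3 := h1.sub h2
    refine h3.congr_deriv ?_
    rw [hz]
    field_simp
  have hmono : MonotoneOn F (Ici r₀) := by
    apply monotoneOn_of_deriv_nonneg (convex_Ici r₀)
    · intro u hu
      exact (hFder u (mem_Ioi.mpr (lt_of_lt_of_le (mem_Ioi.mp hr₀) (mem_Ici.mp hu)))).continuousAt.continuousWithinAt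
    · intro u hu
      rw [interior_Ici] at hu
      exact (hFder u (mem_Ioi.mpr (lt_trans (mem_Ioi.mp hr₀) (mem_Ioi.mp hu)))).differentiableAt.differentiableWithinAt
    · intro u hu
      rw [interior_Ici] at hu
      rw [(hFder u (mem_Ioi.mpr (lt_trans (mem_Ioi.mp hr₀) (mem_Ioi.mp hu)))).deriv]
      apply div_nonneg _ (Real.sinh_pos_iff.mpr (lt_trans (mem_Ioi.mp hr₀) (mem_Ioi.mp hu))).le
      linarith [hzge u (mem_Ici.mpr (le_of_lt (mem_Ioi.mp hu)))]
  set c0 := Real.exp (F r₀) with hc0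
  have key : ∀ t, r₀ ≤ t → c0 ≤ y t := by
    intro t hrt
    have ht0 : 0 < t := lt_of_lt_of_le hr₀ hrt
    have hyt : 0 < y t := hpos t ht0
    have h1 : F r₀ ≤ F t := hmono self_mem_Ici hrt hrt
    have hGt : G t ≤ 0 := hGle t ht0
    have hag : 0 ≤ a * G t := by rw [← neg_mul_neg]; exact mul_nonneg (by linarith) (by linarith)
    have hlog : F r₀ ≤ Real.log (y t) := by
      simp only [hF] at h1 ⊢
      linarith
    calc c0 = Real.exp (F r₀) := rfl
      _ ≤ Real.exp (Real.log (y t)) := Real.exp_le_exp.mpr hlog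
      _ = y t := Real.exp_log hyt
  have hc0pos : 0 < c0 := Real.exp_pos _
  have hev : ∀ᶠ t in atTop, y t < c0 := hliminf.eventually (eventually_lt_nhds hc0pos)
  obtain ⟨N, hN⟩ := eventually_atTop.mp hev
  have h1 := key (max N r₀) (le_max_right _ _)
  have h2 := hN (max N r₀) (le_max_left _ _)
  linarith
end

section
/- Let n ≥ 2 be an integer and let y be a twice differentiable positive solution on (0,∞) of y'' + (n-1)(cosh r/sinh r)·y' - (n-1)y/sinh²r = 0 with y → +∞ at 0⁺, y → 0 at +∞, and y' < 0. Then z(r) = sinh(r)·y'(r)/y(r) satisfies lim_{r→0⁺} z(r) = 1 - n. -/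
open Real Set Filter Topology

/-- If `f` is continuous on `[r₀, s₁]`, starts at or above level `v`, and has strictly
positive derivative at every point of `[r₀, s₁)` where it equals `v`, then `f s₁ ≥ v`. -/
lemma stmt8_nodip {f : ℝ → ℝ} {r₀ s₁ v : ℝ} (h01 : r₀ ≤ s₁)
    (hcont : ContinuousOn f (Icc r₀ s₁)) (hv : v ≤ f r₀)
    (hkey : ∀ s ∈ Ico r₀ s₁, f s = v → ∃ d, 0 < d ∧ HasDerivAt f d s) :
    v ≤ f s₁ := by
  by_contra hcon
  push_neg at hcon
  have hlt : r₀ < s₁ := by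
    rcases eq_or_lt_of_le h01 with h | h
    · exact absurd (h ▸ hv) (not_le.2 hcon)
    · exact h
  set S : Set ℝ := Icc r₀ s₁ ∩ f ⁻¹' (Ici v) with hS
  have hSclosed : IsClosed S := hcont.preimage_isClosed_of_isClosed isClosed_Icc isClosed_Ici
  have hSne : S.Nonempty := ⟨r₀, ⟨le_rfl, h01⟩, hv⟩
  have hSbdd : BddAbove S := ⟨s₁, fun x hx => hx.1.2⟩
  set c := sSup S with hcdef
  have hcS : c ∈ S := hSclosed.csSup_mem hSne hSbdd
  have hc1 : r₀ ≤ c := hcS.1.1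
  have hc2 : c ≤ s₁ := hcS.1.2
  have hcv : v ≤ f c := hcS.2
  have hcs : c < s₁ := by
    rcases eq_or_lt_of_le hc2 with h | h
    · exact absurd (h ▸ hcv) (not_le.2 hcon)
    · exact h
  have habove : ∀ s ∈ Ioc c s₁, f s < v := by
    intro s hs
    by_contra hge
    push_neg at hge
    have : s ∈ S := ⟨⟨le_trans hc1 hs.1.le, hs.2⟩, hge⟩
    exact absurd (le_csSup hSbdd this) (not_le.2 hs.1)
  -- f c = v
  have hne : (𝓝[Ioc c s₁] c).NeBot := by
    refine mem_closure_iff_nhdsWithin_neBot.1 ?_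
    rw [closure_Ioc hcs.ne]
    exact left_mem_Icc.2 hcs.le
  have hfc_le : f c ≤ v := by
    have hcw : ContinuousWithinAt f (Ioc c s₁) c :=
      (hcont.continuousWithinAt hcS.1).mono (fun x hx => ⟨le_trans hc1 hx.1.le, hx.2⟩)
    exact le_of_tendsto hcw (eventually_nhdsWithin_of_forall fun s hs => (habove s hs).le)
  have hfc : f c = v := le_antisymm hfc_le hcv
  obtain ⟨d, hd, hder⟩ := hkey c ⟨hc1, hcs⟩ hfc
  rw [hasDerivAt_iff_tendsto_slope] at hder
  have hslope : ∀ᶠ s in 𝓝[>] c, 0 < slope f c s :=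
    nhdsWithin_mono c (fun x (hx : x ∈ Ioi c) => ne_of_gt hx)
      (hder.eventually (eventually_gt_nhds hd))
  have hmem : Ioc c s₁ ∈ 𝓝[>] c := Ioc_mem_nhdsGT hcs
  obtain ⟨s, hs_slope, hs_mem⟩ := (hslope.and (eventually_of_mem hmem fun x hx => hx)).exists
  have hss : c < s := hs_mem.1
  have : 0 < f s - f c := by
    have h := mul_pos hs_slope (sub_pos.2 hss)
    rwa [slope_def_field, div_mul_cancel₀] at h
    exact sub_ne_zero.2 (ne_of_gt hss)
  have : v < f s := by rw [hfc] at this; linarith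
  exact absurd (habove s hs_mem) (not_lt.2 this.le)

lemma stmt8_sinh_upper {s : ℝ} (hs : 0 ≤ s) : Real.sinh s ≤ s * Real.exp s := by
  have h := Real.add_one_le_exp (-(2 * s))
  have e1 : Real.exp (-(2 * s)) = Real.exp (-s) * Real.exp (-s) := by
    rw [← Real.exp_add]; ring_nf
  have e2 : Real.exp (-s) * Real.exp s = 1 := by rw [← Real.exp_add]; simp
  have hp := Real.exp_pos s
  have hp' := Real.exp_pos (-s)
  rw [Real.sinh_eq]
  nlinarith [mul_le_mul_of_nonneg_left (e1 ▸ h) (le_of_lt hp)]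

lemma stmt8_sinh_lower {r₀ r : ℝ} (h : r₀ ≤ r) :
    Real.exp r * (1 - Real.exp (-(2 * r₀))) / 2 ≤ Real.sinh r := by
  have h1 : Real.exp (-(2 * r)) ≤ Real.exp (-(2 * r₀)) := Real.exp_le_exp.2 (by linarith)
  have e2 : Real.exp (-r) = Real.exp r * Real.exp (-(2 * r)) := by
    rw [← Real.exp_add]; ring_nf
  have hp := Real.exp_pos r
  rw [Real.sinh_eq, e2]
  nlinarith

noncomputable def stmt8A (n : ℕ) (r : ℝ) : ℝ :=
  (-(((n : ℝ) - 2) * Real.cosh r) +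
    Real.sqrt (((n : ℝ) - 2) ^ 2 * Real.cosh r ^ 2 + 4 * ((n : ℝ) - 1))) / 2

noncomputable def stmt8B (n : ℕ) (r : ℝ) : ℝ :=
  (-(((n : ℝ) - 2) * Real.cosh r) -
    Real.sqrt (((n : ℝ) - 2) ^ 2 * Real.cosh r ^ 2 + 4 * ((n : ℝ) - 1))) / 2

lemma stmt8_disc_nonneg (n : ℕ) (hn : 2 ≤ n) (r : ℝ) :
    0 ≤ ((n : ℝ) - 2) ^ 2 * Real.cosh r ^ 2 + 4 * ((n : ℝ) - 1) := by
  have hn2 : (2 : ℝ) ≤ (n : ℝ) := by exact_mod_cast hn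
  nlinarith [sq_nonneg (((n : ℝ) - 2) * Real.cosh r)]

lemma stmt8_Qeq (n : ℕ) (hn : 2 ≤ n) (r v : ℝ) :
    -v ^ 2 - ((n : ℝ) - 2) * Real.cosh r * v + ((n : ℝ) - 1) =
      (stmt8A n r - v) * (v - stmt8B n r) := by
  have hd := stmt8_disc_nonneg n hn r
  have hD2 := Real.sq_sqrt hd
  unfold stmt8A stmt8B
  linear_combination (-(1 : ℝ) / 4) * hD2

lemma stmt8A_pos (n : ℕ) (hn : 2 ≤ n) (r : ℝ) : 0 < stmt8A n r := by
  have hn2 : (2 : ℝ) ≤ (n : ℝ) := by exact_mod_cast hn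
  have hc : 0 ≤ ((n : ℝ) - 2) * Real.cosh r := by
    have := Real.cosh_pos (x := r)
    nlinarith
  have : ((n : ℝ) - 2) * Real.cosh r <
      Real.sqrt (((n : ℝ) - 2) ^ 2 * Real.cosh r ^ 2 + 4 * ((n : ℝ) - 1)) := by
    rw [show ((n : ℝ) - 2) ^ 2 * Real.cosh r ^ 2 = (((n : ℝ) - 2) * Real.cosh r) ^ 2 by ring]
    refine (Real.lt_sqrt hc).2 ?_
    nlinarith
  unfold stmt8A
  linarith

lemma stmt8B_anti (n : ℕ) (hn : 2 ≤ n) {r r' : ℝ} (h0 : 0 ≤ r) (h : r ≤ r') :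
    stmt8B n r' ≤ stmt8B n r := by
  have hn2 : (2 : ℝ) ≤ (n : ℝ) := by exact_mod_cast hn
  have hc : Real.cosh r ≤ Real.cosh r' := by
    rw [Real.cosh_le_cosh, abs_of_nonneg h0, abs_of_nonneg (le_trans h0 h)]
    exact h
  have hcp := Real.cosh_pos (x := r)
  have h1 : ((n : ℝ) - 2) * Real.cosh r ≤ ((n : ℝ) - 2) * Real.cosh r' := by nlinarith
  have h2 : Real.sqrt (((n : ℝ) - 2) ^ 2 * Real.cosh r ^ 2 + 4 * ((n : ℝ) - 1)) ≤
      Real.sqrt (((n : ℝ) - 2) ^ 2 * Real.cosh r' ^ 2 + 4 * ((n : ℝ) - 1)) := by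
    apply Real.sqrt_le_sqrt
    have hc2 : Real.cosh r ^ 2 ≤ Real.cosh r' ^ 2 := by nlinarith
    nlinarith [mul_le_mul_of_nonneg_left hc2 (sq_nonneg ((n : ℝ) - 2))]
  unfold stmt8B
  linarith

lemma stmt8B_zero (n : ℕ) (hn : 2 ≤ n) : stmt8B n 0 = 1 - (n : ℝ) := by
  have hn2 : (2 : ℝ) ≤ (n : ℝ) := by exact_mod_cast hn
  unfold stmt8B
  rw [Real.cosh_zero]
  rw [show ((n : ℝ) - 2) ^ 2 * (1 : ℝ) ^ 2 + 4 * ((n : ℝ) - 1) = ((n : ℝ)) ^ 2 by ring]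
  rw [Real.sqrt_sq (by linarith)]
  ring

lemma stmt8B_le (n : ℕ) (hn : 2 ≤ n) {r : ℝ} (hr : 0 ≤ r) : stmt8B n r ≤ 1 - (n : ℝ) := by
  rw [← stmt8B_zero n hn]
  exact stmt8B_anti n hn le_rfl hr

lemma stmt8B_tendsto (n : ℕ) (hn : 2 ≤ n) :
    Tendsto (stmt8B n) (nhdsWithin 0 (Ioi 0)) (nhds (1 - (n : ℝ))) := by
  have hc : Continuous (stmt8B n) := by
    unfold stmt8B
    fun_prop
  have := (hc.tendsto 0).mono_left (nhdsWithin_le_nhds (s := Ioi (0 : ℝ)))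
  rwa [stmt8B_zero n hn] at this

set_option maxHeartbeats 1000000 in
theorem stmt8 (n : ℕ) (hn : 2 ≤ n) (y : ℝ → ℝ)
    (hpos : ∀ r ∈ Ioi (0 : ℝ), 0 < y r)
    (hy1 : ∀ r ∈ Ioi (0 : ℝ), DifferentiableAt ℝ y r)
    (hy2 : ∀ r ∈ Ioi (0 : ℝ), DifferentiableAt ℝ (deriv y) r)
    (hode : ∀ r ∈ Ioi (0 : ℝ),
      deriv (deriv y) r + (n - 1 : ℝ) * (Real.cosh r / Real.sinh r) * deriv y r
        - (n - 1 : ℝ) * y r / (Real.sinh r) ^ 2 = 0)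
    (hlim0 : Tendsto y (nhdsWithin 0 (Ioi 0)) atTop)
    (hliminf : Tendsto y atTop (nhds 0))
    (hy' : ∀ r ∈ Ioi (0 : ℝ), deriv y r < 0)
    (z : ℝ → ℝ) (hz : ∀ r, z r = Real.sinh r * deriv y r / y r) :
    Tendsto z (nhdsWithin 0 (Ioi 0)) (nhds (1 - n : ℝ)) := by
  have hn2 : (2 : ℝ) ≤ (n : ℝ) := by exact_mod_cast hn
  have hsinh : ∀ r ∈ Ioi (0 : ℝ), 0 < Real.sinh r := fun r hr => by
    exact Real.sinh_pos_iff.2 hr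
  have hzneg : ∀ r ∈ Ioi (0 : ℝ), z r < 0 := fun r hr => by
    rw [hz]
    exact div_neg_of_neg_of_pos (mul_neg_of_pos_of_neg (hsinh r hr) (hy' r hr)) (hpos r hr)
  -- derivative of z: Riccati equation
  have hzd : ∀ r ∈ Ioi (0 : ℝ),
      HasDerivAt z ((stmt8A n r - z r) * (z r - stmt8B n r) / Real.sinh r) r := by
    intro r hr
    have hs := hsinh r hr
    have hy0 := (hpos r hr).ne'
    have h1 : HasDerivAt (fun x => Real.sinh x * deriv y x)
        (Real.cosh r * deriv y r + Real.sinh r * deriv (deriv y) r) r :=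
      (Real.hasDerivAt_sinh r).mul (hy2 r hr).hasDerivAt
    have h2 := h1.div (hy1 r hr).hasDerivAt hy0
    have hzf : z = fun x => Real.sinh x * deriv y x / y x := funext hz
    rw [hzf]
    refine h2.congr_deriv ?_
    rw [← stmt8_Qeq n hn r _]
    have hode'' : deriv (deriv y) r =
        ((n : ℝ) - 1) * y r / Real.sinh r ^ 2
          - ((n : ℝ) - 1) * (Real.cosh r / Real.sinh r) * deriv y r := by
      have := hode r hr
      linarith
    simp only
    rw [hode'']
    field_simp
    ring
  -- z is bounded above by stmt8B
  have hub : ∀ r ∈ Ioi (0 : ℝ), z r ≤ stmt8B n r := by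
    intro r₀ hr₀
    by_contra hlt
    push_neg at hlt
    have hr₀' : (0 : ℝ) < r₀ := hr₀
    have hv₀neg : z r₀ < 0 := hzneg r₀ hr₀
    have hstay : ∀ s₁, r₀ ≤ s₁ → z r₀ ≤ z s₁ := by
      intro s₁ h01
      refine stmt8_nodip h01 ?_ le_rfl ?_
      · intro s hs
        exact ((hzd s (lt_of_lt_of_le hr₀' hs.1)).continuousAt).continuousWithinAt
      · intro s hs hzs
        have hspos : (0 : ℝ) < s := lt_of_lt_of_le hr₀' hs.1
        refine ⟨_, ?_, hzd s hspos⟩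
        rw [hzs]
        apply div_pos _ (hsinh s hspos)
        apply mul_pos
        · have := stmt8A_pos n hn s
          linarith
        · have := stmt8B_anti n hn (le_of_lt hr₀') hs.1
          linarith
    -- monotone auxiliary function leads to a positive lower bound for y at infinity
    set K : ℝ := 2 / (1 - Real.exp (-(2 * r₀))) with hKdef
    have hexp1 : Real.exp (-(2 * r₀)) < 1 := by
      rw [Real.exp_lt_one_iff]
      linarith
    have hK : 0 < K := by
      apply div_pos two_pos
      linarith
    set ψ : ℝ → ℝ := fun r => Real.log (y r) + z r₀ * K * Real.exp (-r) with hψdef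
    have hψd : ∀ x ∈ Ioi (0 : ℝ), HasDerivAt ψ
        (deriv y x / y x + z r₀ * K * (-Real.exp (-x))) x := by
      intro x hx
      have hlog : HasDerivAt (fun r => Real.log (y r)) (deriv y x / y x) x := by
        have := (hy1 x hx).hasDerivAt.log (hpos x hx).ne'
        exact this
      have hexp : HasDerivAt (fun r => Real.exp (-r)) (-Real.exp (-x)) x := by
        have h := (Real.hasDerivAt_exp (-x)).comp x (hasDerivAt_neg x)
        exact h.congr_deriv (by ring)
      exact hlog.add ((hexp.const_mul (z r₀ * K)))
    have hψmono : MonotoneOn ψ (Ici r₀) := by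
      apply monotoneOn_of_deriv_nonneg (convex_Ici r₀)
      · intro x hx
        exact ((hψd x (lt_of_lt_of_le hr₀' hx)).continuousAt).continuousWithinAt
      · intro x hx
        rw [interior_Ici] at hx
        exact (hψd x (lt_trans hr₀' hx)).differentiableAt.differentiableWithinAt
      · intro x hx
        rw [interior_Ici] at hx
        have hx0 : (0 : ℝ) < x := lt_trans hr₀' hx
        rw [(hψd x hx0).deriv]
        have hsx := hsinh x hx0
        have h1 : z r₀ / Real.sinh x ≤ deriv y x / y x := by
          have h := hstay x hx.le
          have heq : z x / Real.sinh x = deriv y x / y x := by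
            rw [hz]
            field_simp [hsx.ne', (hpos x hx0).ne']
          rw [← heq]
          gcongr
        have h2 : z r₀ * (K * Real.exp (-x)) ≤ z r₀ / Real.sinh x := by
          have hlow := stmt8_sinh_lower (le_of_lt hx : r₀ ≤ x)
          have hKx : 1 / Real.sinh x ≤ K * Real.exp (-x) := by
            rw [div_le_iff₀ hsx, hKdef]
            have he : Real.exp (-x) * Real.exp x = 1 := by rw [← Real.exp_add]; simp
            have hex := Real.exp_pos x
            have hex' := Real.exp_pos (-x)
            rw [div_mul_eq_mul_div, div_mul_eq_mul_div, le_div_iff₀ (by linarith : (0:ℝ) < 1 - Real.exp (-(2*r₀)))]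
            nlinarith
          have : z r₀ * (K * Real.exp (-x)) ≤ z r₀ * (1 / Real.sinh x) :=
            mul_le_mul_of_nonpos_left hKx (le_of_lt hv₀neg)
          rwa [mul_one_div] at this
        have h3 : z r₀ * K * -Real.exp (-x) = -(z r₀ * (K * Real.exp (-x))) := by ring
        linarith
    have hyR : ∀ R, r₀ ≤ R → Real.exp (ψ r₀) ≤ y R := by
      intro R hR
      have h1 : ψ r₀ ≤ ψ R := hψmono (self_mem_Ici) hR hR
      have h2 : ψ R ≤ Real.log (y R) := by
        have h3 : z r₀ * K * Real.exp (-R) ≤ 0 := by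
          nlinarith [mul_pos hK (Real.exp_pos (-R)), hv₀neg]
        simp only [hψdef]
        linarith
      have h4 : Real.exp (ψ r₀) ≤ Real.exp (Real.log (y R)) :=
        Real.exp_le_exp.2 (le_trans h1 h2)
      rwa [Real.exp_log (hpos R (lt_of_lt_of_le hr₀' hR))] at h4
    have hev : ∀ᶠ R in atTop, y R < Real.exp (ψ r₀) :=
      hliminf.eventually (gt_mem_nhds (Real.exp_pos _))
    obtain ⟨R, hR1, hR2⟩ := (hev.and (eventually_ge_atTop r₀)).exists
    exact absurd (hyR R hR2) (not_le.2 hR1)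
  -- z is antitone on (0, ∞)
  have hzanti : AntitoneOn z (Ioi (0 : ℝ)) := by
    apply antitoneOn_of_deriv_nonpos (convex_Ioi 0)
    · intro x hx
      exact ((hzd x hx).continuousAt).continuousWithinAt
    · intro x hx
      rw [interior_Ioi] at hx
      exact (hzd x hx).differentiableAt.differentiableWithinAt
    · intro x hx
      rw [interior_Ioi] at hx
      rw [(hzd x hx).deriv]
      apply div_nonpos_of_nonpos_of_nonneg _ (le_of_lt (hsinh x hx))
      apply mul_nonpos_of_nonneg_of_nonpos
      · have := stmt8A_pos n hn x
        have := hzneg x hx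
        linarith
      · have := hub x hx
        linarith
  -- final squeeze
  rw [tendsto_order]
  constructor
  · -- lower bound
    intro a ha
    by_contra hcon
    have hfreq : ∃ᶠ r in nhdsWithin 0 (Ioi 0), z r ≤ a := by
      rw [Filter.not_eventually] at hcon
      exact hcon.mono fun r hr => not_lt.1 hr
    have hall : ∀ r ∈ Ioi (0 : ℝ), z r ≤ a := by
      intro r hr
      obtain ⟨r', hr'le, hr'mem⟩ :=
        (hfreq.and_eventually (eventually_of_mem
          (Ioo_mem_nhdsGT (hr : (0:ℝ) < r)) fun x hx => hx)).exists
      exact le_trans (hzanti hr'mem.1 hr hr'mem.2.le) hr'le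
    set ε : ℝ := (1 - (n : ℝ)) - a with hεdef
    have hεpos : 0 < ε := by simp only [hεdef]; linarith
    obtain ⟨s₁, hs₁B, hs₁pos⟩ := ((stmt8B_tendsto n hn).eventually
      (eventually_gt_nhds (by linarith : 1 - (n : ℝ) - ε / 2 < 1 - (n : ℝ)))).and
      self_mem_nhdsWithin |>.exists
    have hs₁pos' : (0 : ℝ) < s₁ := hs₁pos
    set c : ℝ := ε / (2 * Real.exp s₁) with hcdef
    have hcpos : 0 < c := by
      apply div_pos hεpos
      positivity
    -- derivative bound on (0, s₁]
    have hderiv_bound : ∀ s ∈ Ioo (0 : ℝ) s₁, deriv z s + c * s⁻¹ ≤ 0 := by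
      intro s hs
      have hspos := hs.1
      have hssinh := hsinh s hspos
      have hzs := hall s hspos
      have hBs : 1 - (n : ℝ) - ε / 2 < stmt8B n s := by
        have := stmt8B_anti n hn (le_of_lt hspos) hs.2.le
        linarith
      have hQ : (stmt8A n s - z s) * (z s - stmt8B n s) ≤ -(ε / 2) := by
        have h1 : 1 ≤ stmt8A n s - z s := by
          have := stmt8A_pos n hn s
          nlinarith
        have h2 : z s - stmt8B n s ≤ -(ε / 2) := by
          linarith
        nlinarith
      rw [(hzd s hspos).deriv]
      have hd1 : (stmt8A n s - z s) * (z s - stmt8B n s) / Real.sinh s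
          ≤ -(ε / 2) / Real.sinh s := by gcongr
      have hd2 : -(ε / 2) / Real.sinh s ≤ -(c * s⁻¹) := by
        rw [div_le_iff₀ hssinh]
        have hsinhle : Real.sinh s ≤ s * Real.exp s₁ := by
          have h1 := stmt8_sinh_upper (le_of_lt hspos)
          have h2 : Real.exp s ≤ Real.exp s₁ := Real.exp_le_exp.2 hs.2.le
          nlinarith
        have hcs : c * s⁻¹ * Real.sinh s ≤ c * s⁻¹ * (s * Real.exp s₁) := by
          apply mul_le_mul_of_nonneg_left hsinhle
          positivity
        have : c * s⁻¹ * (s * Real.exp s₁) = ε / 2 := by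
          rw [hcdef]
          field_simp
        nlinarith
      linarith
    -- φ is antitone on (0, s₁]
    have hφd : ∀ s ∈ Ioi (0 : ℝ),
        HasDerivAt (fun x => z x + c * Real.log x) (deriv z s + c * s⁻¹) s := by
      intro s hs
      have h1 : HasDerivAt z (deriv z s) s := (hzd s hs).differentiableAt.hasDerivAt
      have h2 : HasDerivAt (fun x => c * Real.log x) (c * s⁻¹) s :=
        (Real.hasDerivAt_log (ne_of_gt hs)).const_mul c
      exact h1.add h2
    have hφanti : AntitoneOn (fun x => z x + c * Real.log x) (Ioc (0 : ℝ) s₁) := by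
      apply antitoneOn_of_deriv_nonpos (convex_Ioc 0 s₁)
      · intro x hx
        exact ((hφd x hx.1).continuousAt).continuousWithinAt
      · intro x hx
        rw [interior_Ioc] at hx
        exact (hφd x hx.1).differentiableAt.differentiableWithinAt
      · intro x hx
        rw [interior_Ioc] at hx
        rw [(hφd x hx.1).deriv]
        exact hderiv_bound x hx
    -- choose small s to get a contradiction
    set M : ℝ := (z s₁ + c * Real.log s₁ - a) / c with hMdef
    set s : ℝ := min (Real.exp (M - 1)) s₁ with hsdef
    have hspos : 0 < s := lt_min (Real.exp_pos _) hs₁pos'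
    have hsle : s ≤ s₁ := min_le_right _ _
    have h1 := hφanti (show s ∈ Ioc 0 s₁ from ⟨hspos, hsle⟩)
      (show s₁ ∈ Ioc 0 s₁ from ⟨hs₁pos', le_rfl⟩) hsle
    simp only at h1
    have hlog : Real.log s ≤ M - 1 := by
      have := Real.log_le_log hspos (min_le_left (Real.exp (M - 1)) s₁)
      rwa [Real.log_exp] at this
    have hMc : c * M = z s₁ + c * Real.log s₁ - a := by
      rw [hMdef]
      field_simp
    have h2 : z s ≤ a := hall s hspos
    have h3 : c * Real.log s ≤ c * (M - 1) := mul_le_mul_of_nonneg_left hlog (le_of_lt hcpos)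
    linarith
  · -- upper bound
    intro a ha
    filter_upwards [self_mem_nhdsWithin] with r hr
    have h1 := hub r hr
    have h2 := stmt8B_le n hn (le_of_lt (hr : (0:ℝ) < r))
    linarith
end

section
/- Let n ≥ 2 be an integer and f = sinh. Every positive, twice differentiable solution y : (0,∞) → ℝ of y'' + (n-1)(f'/f)·y' - (n-1)·y/f² = 0 satisfying y(r) → +∞ as r → 0⁺, y(r) → 0 as r → +∞, and y' < 0 on (0,∞), is of the form y(r) = c·(sinh r)^{1-n} for some constant c > 0. -/
open Real Set Filter

lemma constIoi {F : ℝ → ℝ} (h : ∀ r ∈ Ioi (0:ℝ), HasDerivAt F 0 r) :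
    ∀ r ∈ Ioi (0:ℝ), F r = F 1 := by
  have hdiff : DifferentiableOn ℝ F (interior (Ioi (0:ℝ))) := by
    rw [interior_Ioi]; exact fun x hx => ((h x hx).differentiableAt).differentiableWithinAt
  have hcont : ContinuousOn F (Ioi (0:ℝ)) :=
    fun x hx => ((h x hx).differentiableAt).continuousAt.continuousWithinAt
  have h0 : ∀ x ∈ interior (Ioi (0:ℝ)), deriv F x = 0 := by
    rw [interior_Ioi]; exact fun x hx => (h x hx).deriv
  have mono := monotoneOn_of_deriv_nonneg (convex_Ioi 0) hcont hdiff
    (fun x hx => (h0 x hx).ge)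
  have anti := antitoneOn_of_deriv_nonpos (convex_Ioi 0) hcont hdiff
    (fun x hx => (h0 x hx).le)
  intro r hr
  have h1 : (1:ℝ) ∈ Ioi (0:ℝ) := by norm_num
  rcases le_total r 1 with hle | hle
  · exact le_antisymm (mono hr h1 hle) (anti hr h1 hle)
  · exact le_antisymm (anti h1 hr hle) (mono h1 hr hle)

theorem stmt14 (n : ℕ) (hn : 2 ≤ n) (y : ℝ → ℝ)
    (hpos : ∀ r ∈ Ioi (0 : ℝ), 0 < y r)
    (hy1 : ∀ r ∈ Ioi (0 : ℝ), DifferentiableAt ℝ y r)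
    (hy2 : ∀ r ∈ Ioi (0 : ℝ), DifferentiableAt ℝ (deriv y) r)
    (hode : ∀ r ∈ Ioi (0 : ℝ),
      deriv (deriv y) r + (n - 1 : ℝ) * (Real.cosh r / Real.sinh r) * deriv y r
        - (n - 1 : ℝ) * y r / (Real.sinh r) ^ 2 = 0)
    (hlim0 : Tendsto y (nhdsWithin 0 (Ioi 0)) atTop)
    (hliminf : Tendsto y atTop (nhds 0))
    (hy' : ∀ r ∈ Ioi (0 : ℝ), deriv y r < 0) :
    ∃ c > (0 : ℝ), ∀ r ∈ Ioi (0 : ℝ), y r = c * Real.sinh r ^ ((1 : ℤ) - n) := by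
  have hm : (1:ℝ) ≤ (n:ℝ) - 1 := by
    have : (2:ℝ) ≤ n := by exact_mod_cast hn
    linarith
  set m : ℝ := (n:ℝ) - 1 with hmdef
  set u : ℝ → ℝ := fun t => deriv y t * Real.sinh t + m * (y t * Real.cosh t) with hudef
  -- derivative of u
  have hu : ∀ r ∈ Ioi (0:ℝ), HasDerivAt u ((Real.cosh r / Real.sinh r) * u r) r := by
    intro r hr
    have hsr : 0 < Real.sinh r := Real.sinh_pos_iff.2 hr
    have h1 : HasDerivAt (deriv y) (deriv (deriv y) r) r := (hy2 r hr).hasDerivAt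
    have h2 : HasDerivAt Real.sinh (Real.cosh r) r := Real.hasDerivAt_sinh r
    have h3 : HasDerivAt y (deriv y r) r := (hy1 r hr).hasDerivAt
    have h4 : HasDerivAt Real.cosh (Real.sinh r) r := Real.hasDerivAt_cosh r
    have hd := (h1.mul h2).add (((h3.mul h4)).const_mul m)
    convert hd using 1
    · rfl
    · rfl
    · rfl
    have hode' := hode r hr
    have hy'' : deriv (deriv y) r
        = m * y r / (Real.sinh r)^2 - m * (Real.cosh r / Real.sinh r) * deriv y r := by
      rw [hmdef]; linarith
    have hc2 : Real.cosh r ^ 2 = Real.sinh r ^ 2 + 1 := Real.cosh_sq r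
    rw [hudef]
    simp only []
    rw [hy'']
    field_simp
    linear_combination (m * y r) * hc2
  -- u / sinh is constant
  set φ : ℝ → ℝ := fun t => u t / Real.sinh t with hφdef
  have hφ : ∀ r ∈ Ioi (0:ℝ), HasDerivAt φ 0 r := by
    intro r hr
    have hsr : 0 < Real.sinh r := Real.sinh_pos_iff.2 hr
    have hd := (hu r hr).div (Real.hasDerivAt_sinh r) hsr.ne'
    convert hd using 1
    · rfl
    · rfl
    · rfl
    field_simp
    ring
  set K : ℝ := φ 1 with hKdef
  have hKeq : ∀ r ∈ Ioi (0:ℝ), u r = K * Real.sinh r := by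
    intro r hr
    have := constIoi hφ r hr
    have hsr : 0 < Real.sinh r := Real.sinh_pos_iff.2 hr
    have hs1 : 0 < Real.sinh 1 := Real.sinh_pos_iff.2 one_pos
    rw [hφdef] at this
    simp only [] at this
    rw [div_eq_div_iff hsr.ne' hs1.ne'] at this
    show u r = u 1 / Real.sinh 1 * Real.sinh r
    field_simp
    linear_combination this
  -- deriv y in terms of K
  have hdy : ∀ r ∈ Ioi (0:ℝ),
      deriv y r = K - m * y r * (Real.cosh r / Real.sinh r) := by
    intro r hr
    have hsr : 0 < Real.sinh r := Real.sinh_pos_iff.2 hr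
    have := hKeq r hr
    rw [hudef] at this
    simp only [] at this
    field_simp
    linear_combination this
  have hyal : ∀ r ∈ Ioi (0:ℝ), 0 < m * y r * (Real.cosh r / Real.sinh r) := by
    intro r hr
    have hsr : 0 < Real.sinh r := Real.sinh_pos_iff.2 hr
    have hcr : 0 < Real.cosh r := Real.cosh_pos r
    have hyr := hpos r hr
    have hmp : (0:ℝ) < m := by linarith
    exact mul_pos (mul_pos hmp hyr) (div_pos hcr hsr)
  -- K ≤ 0
  have hKle : K ≤ 0 := by
    by_contra hK
    push_neg at hK
    set ε : ℝ := K * Real.sinh 1 / (m * Real.cosh 1) with hεdef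
    have hε : 0 < ε := by
      have h1 : 0 < Real.sinh 1 := Real.sinh_pos_iff.2 one_pos
      have h2 : (0:ℝ) < Real.cosh 1 := Real.cosh_pos 1
      have hmp : (0:ℝ) < m := by linarith
      exact div_pos (mul_pos hK h1) (mul_pos hmp h2)
    have hbig : ∀ r : ℝ, 1 ≤ r → ε < y r := by
      intro r hr1
      have hr : r ∈ Ioi (0:ℝ) := lt_of_lt_of_le one_pos hr1
      have hsr : 0 < Real.sinh r := Real.sinh_pos_iff.2 hr
      have hs1 : 0 < Real.sinh 1 := Real.sinh_pos_iff.2 one_pos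
      have hcoth : Real.cosh r / Real.sinh r ≤ Real.cosh 1 / Real.sinh 1 := by
        rw [div_le_div_iff₀ hsr hs1]
        have : 0 ≤ Real.sinh (r - 1) := Real.sinh_nonneg_iff.2 (by linarith)
        rw [Real.sinh_sub] at this
        linarith
      have h5 := hy' r hr
      rw [hdy r hr] at h5
      -- K < m * y r * (cosh r / sinh r) ≤ m * y r * (cosh 1 / sinh 1)
      have hyr := hpos r hr
      have h6 : K < m * y r * (Real.cosh 1 / Real.sinh 1) := by
        have h7 : m * y r * (Real.cosh r / Real.sinh r)
            ≤ m * y r * (Real.cosh 1 / Real.sinh 1) := by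
          apply mul_le_mul_of_nonneg_left hcoth
          have hmp : (0:ℝ) < m := by linarith
          nlinarith [hpos r hr]
        linarith
      rw [hεdef]
      rw [div_lt_iff₀ (mul_pos (by linarith : (0:ℝ) < m) (Real.cosh_pos 1))]
      have hc1 : (0:ℝ) < Real.cosh 1 := Real.cosh_pos 1
      calc K * Real.sinh 1 < m * y r * (Real.cosh 1 / Real.sinh 1) * Real.sinh 1 := by
            exact mul_lt_mul_of_pos_right h6 hs1
        _ = y r * (m * Real.cosh 1) := by field_simp
    have := (hliminf.eventually (gt_mem_nhds hε)).and (eventually_ge_atTop (1:ℝ))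
    obtain ⟨r, h1, h2⟩ := this.exists
    exact absurd (hbig r h2) (not_lt.2 h1.le)
  -- K ≥ 0
  have hKge : 0 ≤ K := by
    by_contra hK
    push_neg at hK
    set ψ : ℝ → ℝ := fun t => y t - K * t with hψdef
    have hψd : ∀ r ∈ Ioi (0:ℝ), HasDerivAt ψ (deriv y r - K) r := by
      intro r hr
      have hid : HasDerivAt (fun t : ℝ => K * t) K r := by
        simpa using (hasDerivAt_id r).const_mul K
      exact ((hy1 r hr).hasDerivAt).sub hid
    have hψc : ContinuousOn ψ (Ioi (0:ℝ)) :=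
      fun x hx => ((hψd x hx).differentiableAt).continuousAt.continuousWithinAt
    have hψdiff : DifferentiableOn ℝ ψ (interior (Ioi (0:ℝ))) := by
      rw [interior_Ioi]; exact fun x hx => ((hψd x hx).differentiableAt).differentiableWithinAt
    have hanti : AntitoneOn ψ (Ioi (0:ℝ)) := by
      apply antitoneOn_of_deriv_nonpos (convex_Ioi 0) hψc hψdiff
      intro x hx
      rw [interior_Ioi] at hx
      rw [(hψd x hx).deriv]
      have := hdy x hx
      have := hyal x hx
      linarith
    set R : ℝ := 1 + (y 1 + 1) / (-K) with hRdef
    have hy1pos : 0 < y 1 := hpos 1 (by norm_num)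
    have hR1 : 1 ≤ R := by
      rw [hRdef]
      have : 0 < (y 1 + 1) / (-K) := div_pos (by linarith) (by linarith)
      linarith
    have hRpos : R ∈ Ioi (0:ℝ) := lt_of_lt_of_le one_pos hR1
    have := hanti (show (1:ℝ) ∈ Ioi (0:ℝ) by norm_num) hRpos hR1
    rw [hψdef] at this
    simp only [] at this
    have hKR : K * R = K + K * ((y 1 + 1) / (-K)) := by rw [hRdef]; ring
    have hKne : K ≠ 0 := hK.ne
    have hKy : K * ((y 1 + 1) / (-K)) = -(y 1 + 1) := by
      field_simp
    have hyR := hpos R hRpos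
    rw [hKR, hKy] at this
    linarith
  have hK0 : K = 0 := le_antisymm hKle hKge
  -- g = y * sinh^(n-1) is constant
  set g : ℝ → ℝ := fun t => y t * Real.sinh t ^ (n - 1) with hgdef
  have hg : ∀ r ∈ Ioi (0:ℝ), HasDerivAt g 0 r := by
    intro r hr
    have hsr : 0 < Real.sinh r := Real.sinh_pos_iff.2 hr
    have h3 : HasDerivAt y (deriv y r) r := (hy1 r hr).hasDerivAt
    have h2 : HasDerivAt Real.sinh (Real.cosh r) r := Real.hasDerivAt_sinh r
    have hd := h3.mul ((h2.pow (n-1)))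
    convert hd using 1
    · rfl
    · rfl
    · rfl
    have hu0 : u r = 0 := by rw [hKeq r hr, hK0]; ring
    rw [hudef] at hu0
    simp only [] at hu0
    -- goal : 0 = deriv y r * sinh r ^ (n-1) + y r * ((n-1) * sinh r ^ (n-1-1) * cosh r)
    have hnn : n - 1 = (n - 2) + 1 := by omega
    have hnm : n - 1 - 1 = n - 2 := by omega
    have hcast : ((n - 1 : ℕ) : ℝ) = m := by
      rw [hmdef]; push_cast [Nat.cast_sub (by omega : 1 ≤ n)]; ring
    rw [hnm, hcast, hnn, pow_succ]
    rw [Pi.mul_apply, Pi.pow_apply]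
    linear_combination (-(Real.sinh r ^ (n-2))) * hu0
  set c : ℝ := y 1 * Real.sinh 1 ^ (n - 1) with hcdef
  have hcpos : 0 < c := mul_pos (hpos 1 (by norm_num))
    (pow_pos (Real.sinh_pos_iff.2 one_pos) _)
  refine ⟨c, hcpos, fun r hr => ?_⟩
  have hgc := constIoi hg r hr
  rw [hgdef] at hgc
  simp only [] at hgc
  have hsr : 0 < Real.sinh r := Real.sinh_pos_iff.2 hr
  have hzp : Real.sinh r ^ ((1:ℤ) - n) = (Real.sinh r ^ (n - 1 : ℕ))⁻¹ := by
    rw [← zpow_natCast (Real.sinh r) (n-1), ← zpow_neg]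
    congr 1
    push_cast [Nat.cast_sub (by omega : 1 ≤ n)]
    ring
  rw [hzp, hcdef, ← hgc]
  field_simp
end

section
/- Let n ≥ 3 and suppose z : (0,∞) → ℝ is differentiable with sinh(r)·z' = -z² - (n-2)cosh(r)·z + (n-1), and suppose -β ≤ z(r) < 0 for all r > r̃ for some constants β, r̃ > 0. Then z(r) → 0 as r → +∞. -/
open Real Set Filter

theorem stmt15 (n : ℕ) (hn : 3 ≤ n) (z : ℝ → ℝ)
    (hzd : ∀ r ∈ Ioi (0 : ℝ), DifferentiableAt ℝ z r)
    (hode : ∀ r ∈ Ioi (0 : ℝ),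
      Real.sinh r * deriv z r
        = -(z r) ^ 2 - (n - 2 : ℝ) * Real.cosh r * z r + (n - 1 : ℝ))
    (β rt : ℝ) (hβ : 0 < β) (hrt : 0 < rt)
    (hbd : ∀ r > rt, -β ≤ z r ∧ z r < 0) :
    Tendsto z atTop (nhds 0) := by
  have hn2 : (1 : ℝ) ≤ (n : ℝ) - 2 := by
    have : (3 : ℝ) ≤ (n : ℝ) := by exact_mod_cast hn
    linarith
  have hcont : ContinuousOn z (Ioi 0) := fun r hr =>
    (hzd r hr).continuousAt.continuousWithinAt
  rw [Metric.tendsto_atTop]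
  intro ε hε
  set δ : ℝ := ((n : ℝ) - 2) * ε / 4 with hδdef
  have hδ : 0 < δ := by
    have : (0:ℝ) < (n:ℝ) - 2 := by linarith
    positivity
  -- cosh lower bound : cosh r ≥ (r+1)/2
  have hcosh_ge : ∀ r : ℝ, (r + 1) / 2 ≤ Real.cosh r := by
    intro r
    rw [Real.cosh_eq]
    have h1 := Real.add_one_le_exp r
    have h2 : (0:ℝ) ≤ Real.exp (-r) := (Real.exp_pos _).le
    linarith
  -- choose R
  set R : ℝ := max (8 * β ^ 2 / (((n:ℝ) - 2) * ε)) (rt + 1) with hRdef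
  have hRrt : rt < R := lt_of_lt_of_le (lt_add_one rt) (le_max_right _ _)
  have hRpos : 0 < R := hrt.trans hRrt
  have hR0 : ∀ r, R ≤ r → β ^ 2 ≤ ((n:ℝ) - 2) * (ε / 4) * Real.cosh r := by
    intro r hr
    have h1 : 8 * β ^ 2 / (((n:ℝ) - 2) * ε) ≤ r := le_trans (le_max_left _ _) hr
    have hne : (0:ℝ) < ((n:ℝ) - 2) * ε := by nlinarith
    have h2 : 8 * β ^ 2 ≤ (((n:ℝ) - 2) * ε) * r := by
      rw [div_le_iff₀ hne] at h1; linarith [h1]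
    have h3 : (r + 1) / 2 ≤ Real.cosh r := hcosh_ge r
    nlinarith
  -- key derivative bound
  have key : ∀ r, R < r → z r ≤ -(ε / 2) → δ ≤ deriv z r := by
    intro r hr hz
    have hr0 : r ∈ Ioi (0:ℝ) := hRpos.trans hr
    have hrt' : rt < r := hRrt.trans hr
    obtain ⟨hzl, hzu⟩ := hbd r hrt'
    have hsinh : 0 < Real.sinh r := Real.sinh_pos_iff.2 hr0
    have hcoshpos : 0 < Real.cosh r := Real.cosh_pos r
    have hsc : Real.sinh r < Real.cosh r := Real.sinh_lt_cosh r
    have hsq : (z r) ^ 2 ≤ β ^ 2 := sq_le_sq' hzl (le_trans hzu.le hβ.le)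
    have hA : δ * Real.sinh r ≤ -(z r) ^ 2 - ((n:ℝ) - 2) * Real.cosh r * z r + ((n:ℝ) - 1) := by
      have hb := hR0 r hr.le
      have h1 : ((n:ℝ) - 2) * Real.cosh r * (ε / 2) ≤ -(((n:ℝ) - 2) * Real.cosh r * z r) := by
        have : z r ≤ -(ε/2) := hz
        nlinarith
      nlinarith
    have hode' := hode r hr0
    have : δ * Real.sinh r ≤ Real.sinh r * deriv z r := by rw [hode']; exact hA
    have := (mul_le_mul_iff_of_pos_right hsinh).mp (by linarith [this] : δ * Real.sinh r ≤ deriv z r * Real.sinh r)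
    exact this
  -- growth lemma on intervals where z ≤ -ε/2
  have grow : ∀ a b : ℝ, R < a → a ≤ b → (∀ r ∈ Ioo a b, z r ≤ -(ε / 2)) →
      δ * (b - a) ≤ z b - z a := by
    intro a b ha hab hsmall
    have hsub : Icc a b ⊆ Ioi (0:ℝ) := fun x hx => hRpos.trans (ha.trans_le hx.1)
    have hint : interior (Icc a b) = Ioo a b := interior_Icc
    refine Convex.mul_sub_le_image_sub_of_le_deriv (convex_Icc a b)
      (hcont.mono hsub) ?_ ?_ a (left_mem_Icc.2 hab) b (right_mem_Icc.2 hab) hab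
    · rw [hint]
      intro x hx
      exact ((hzd x (hsub (Ioo_subset_Icc_self hx))).differentiableWithinAt)
    · rw [hint]
      intro x hx
      exact key x (ha.trans hx.1) (hsmall x hx)
  -- existence of r1 > R with z r1 ≥ -ε/2
  obtain ⟨r1, hr1R, hr1z⟩ : ∃ r1, R < r1 ∧ -(ε / 2) ≤ z r1 := by
    by_contra h
    push_neg at h
    have hall : ∀ r, R < r → z r ≤ -(ε / 2) := fun r hr => (h r hr).le
    set a := R + 1 with hadef
    set b := a + (β + 1) / δ with hbdef
    have haR : R < a := lt_add_one R
    have hab : a ≤ b := by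
      have h0 : 0 < (β + 1) / δ := by positivity
      rw [hbdef]; linarith
    have hgr := grow a b haR hab (fun r hr => hall r (haR.trans hr.1))
    have hba : δ * (b - a) = β + 1 := by
      rw [hbdef]; field_simp; ring
    obtain ⟨hal, hau⟩ := hbd a (hRrt.trans haR)
    obtain ⟨hbl, hbu⟩ := hbd b (hRrt.trans (haR.trans_le hab))
    rw [hba] at hgr
    linarith
  -- z stays ≥ -ε/2 after r1
  have hstay : ∀ r2, r1 ≤ r2 → -(ε / 2) ≤ z r2 := by
    intro r2 hr2
    by_contra h
    push_neg at h
    have hlt : r1 < r2 := by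
      rcases eq_or_lt_of_le hr2 with rfl | h'
      · exact absurd hr1z (not_le.2 h)
      · exact h'
    let S : Set ℝ := Icc r1 r2 ∩ z ⁻¹' (Ici (-(ε / 2)))
    have hsubS : Icc r1 r2 ⊆ Ioi (0:ℝ) := fun x hx =>
      hRpos.trans (hr1R.trans_le hx.1)
    have hSclosed : IsClosed S :=
      (hcont.mono hsubS).preimage_isClosed_of_isClosed isClosed_Icc isClosed_Ici
    have hSne : S.Nonempty := ⟨r1, ⟨le_refl _, hlt.le⟩, hr1z⟩
    have hSbdd : BddAbove S := ⟨r2, fun x hx => hx.1.2⟩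
    have hsmem : sSup S ∈ S := hSclosed.csSup_mem hSne hSbdd
    obtain ⟨s, hsS, hsmax⟩ : ∃ s ∈ S, ∀ x ∈ S, x ≤ s :=
      ⟨sSup S, hsmem, fun x hx => le_csSup hSbdd hx⟩
    obtain ⟨⟨hs1, hs2⟩, hszl⟩ := hsS
    have hsz : -(ε / 2) ≤ z s := hszl
    have hslt : s < r2 := lt_of_le_of_ne hs2 (by rintro rfl; exact absurd hsz (not_le.2 h))
    -- on (s, r2), z < -ε/2
    have hsmall : ∀ x ∈ Ioo s r2, z x ≤ -(ε / 2) := by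
      intro x hx
      by_contra hzx
      push_neg at hzx
      have hxS : x ∈ S := ⟨⟨hs1.trans hx.1.le, hx.2.le⟩, hzx.le⟩
      exact absurd (hsmax x hxS) (not_le.2 hx.1)
    have hgr := grow s r2 (hr1R.trans_le hs1) hslt.le hsmall
    have : 0 ≤ δ * (r2 - s) := mul_nonneg hδ.le (by linarith)
    linarith
  -- conclude
  refine ⟨r1, fun r hr => ?_⟩
  have hrz := hstay r hr
  have hrneg := (hbd r (hRrt.trans (hr1R.trans_le hr))).2
  rw [Real.dist_eq, sub_zero, abs_of_neg hrneg]
  linarith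
end
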